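/- arXiv:1207.2212 — 7 statements merged into one kernel-verified Lean document; each statement's English description precedes it below -/
import Mathlib

section
/- If f is h-convex on an interval I (i.e., f nonnegative and f(αx + (1-α)y) ≤ h(α)f(x) + h(1-α)f(y) for all x,y ∈ I, α ∈ (0,1), where h : J → ℝ is nonnegative, h ≠ 0, (0,1) ⊆ J), f ∈ L¹[a,b] with a < b, and h(1/2) > 0, then (1/(2h(1/2))) f((a+b)/2) ≤ (1/(b-a)) ∫ₐᵇ f(x) dx ≤ (f(a) + f(b)) ∫₀¹ h(t) dt. -/
open MeasureTheory

/-- `f` is `h`-convex on `S`: `f` is nonnegative and satisfies the `h`-convexity inequality. -/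
def HConvexOn (h : ℝ → ℝ) (S : Set ℝ) (f : ℝ → ℝ) : Prop :=
  (∀ x ∈ S, 0 ≤ f x) ∧
    ∀ x ∈ S, ∀ y ∈ S, ∀ t ∈ Set.Ioo (0:ℝ) 1,
      f (t * x + (1 - t) * y) ≤ h t * f x + h (1 - t) * f y

theorem stmt_1 (h f : ℝ → ℝ) (a b : ℝ) (hab : a < b)
    (hh0 : ∀ t ∈ Set.Ioo (0:ℝ) 1, 0 ≤ h t) (hhne : h ≠ 0)
    (hhint : IntervalIntegrable h volume 0 1)
    (hconv : HConvexOn h (Set.Icc a b) f)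
    (hfint : IntervalIntegrable f volume a b)
    (hhalf : 0 < h (1/2)) :
    (1 / (2 * h (1/2))) * f ((a + b) / 2) ≤ (1 / (b - a)) * ∫ x in a..b, f x ∧
      (1 / (b - a)) * ∫ x in a..b, f x ≤ (f a + f b) * ∫ t in (0:ℝ)..1, h t := by
  have hba : (0:ℝ) < b - a := by linarith
  have hane : a - b ≠ 0 := by intro hc; linarith [sub_eq_zero.mp hc]
  have ha : a ∈ Set.Icc a b := ⟨le_refl a, hab.le⟩
  have hb : b ∈ Set.Icc a b := ⟨hab.le, le_refl b⟩
  -- integrability of reflected h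
  have hh1int : IntervalIntegrable (fun t => h (1 - t)) volume 0 1 := by
    have := hhint.comp_sub_left 1
    simpa using this.symm
  -- ∫₀¹ h(1-t) = ∫₀¹ h
  have hhsym : (∫ t in (0:ℝ)..1, h (1 - t)) = ∫ t in (0:ℝ)..1, h t := by
    have := intervalIntegral.integral_comp_sub_left (a := (0:ℝ)) (b := 1) h 1
    simpa using this
  -- integrability of t ↦ f ((a-b)*t + b) on [0,1]
  have hg1 : IntervalIntegrable (fun t => f ((a - b) * t + b)) volume 0 1 := by
    have h1 : IntervalIntegrable (fun x => f (x + b)) volume (a - b) 0 := by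
      simpa using hfint.comp_add_right b
    have h2 := h1.comp_mul_left (c := a - b)
    have e1 : (a - b) / (a - b) = (1:ℝ) := div_self hane
    rw [e1] at h2
    simpa using h2.symm
  -- substitution: ∫₀¹ f((a-b)t+b) dt = (1/(b-a)) ∫ₐᵇ f
  have hsub : (∫ t in (0:ℝ)..1, f ((a - b) * t + b)) = (1 / (b - a)) * ∫ x in a..b, f x := by
    have := intervalIntegral.integral_comp_mul_add f hane b (a := 0) (b := 1)
    rw [this]
    rw [intervalIntegral.integral_symm]
    simp only [mul_zero, zero_add, mul_one, sub_add_cancel, smul_eq_mul]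
    field_simp
    ring
  constructor
  · -- left inequality
    -- reflected f integrable
    have hrefl : IntervalIntegrable (fun x => f (a + b - x)) volume a b := by
      have := hfint.comp_sub_left (a + b)
      simpa [add_sub_cancel_right, add_sub_cancel_left] using this.symm
    have hsum : IntervalIntegrable (fun x => h (1/2) * (f x + f (a + b - x))) volume a b :=
      (hfint.add hrefl).const_mul _
    have hmono : (∫ x in a..b, f ((a + b) / 2)) ≤
        ∫ x in a..b, h (1/2) * (f x + f (a + b - x)) := by
      apply intervalIntegral.integral_mono_on hab.le (intervalIntegrable_const) hsum
      intro x hx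
      have hx' : a + b - x ∈ Set.Icc a b := ⟨by linarith [hx.2], by linarith [hx.1]⟩
      have := hconv.2 x hx (a + b - x) hx' (1/2) ⟨by norm_num, by norm_num⟩
      have e : (1:ℝ)/2 * x + (1 - 1/2) * (a + b - x) = (a + b) / 2 := by ring
      rw [e] at this
      calc f ((a + b) / 2) ≤ h (1/2) * f x + h (1 - 1/2) * f (a + b - x) := this
        _ = h (1/2) * (f x + f (a + b - x)) := by norm_num; ring
    have hreflint : (∫ x in a..b, f (a + b - x)) = ∫ x in a..b, f x := by
      have := intervalIntegral.integral_comp_sub_left (a := a) (b := b) f (a + b)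
      simpa [add_sub_cancel_right, add_sub_cancel_left] using this
    rw [intervalIntegral.integral_const, intervalIntegral.integral_const_mul,
      intervalIntegral.integral_add hfint hrefl, hreflint, smul_eq_mul] at hmono
    -- (b-a) f(m) ≤ 2 h(1/2) ∫
    rw [div_mul_eq_mul_div, div_mul_eq_mul_div, div_le_div_iff₀ (by positivity) hba]
    nlinarith [hmono]
  · -- right inequality
    rw [← hsub]
    have hcmp : IntervalIntegrable (fun t => h t * f a + h (1 - t) * f b) volume 0 1 :=
      (hhint.mul_const _).add (hh1int.mul_const _)
    have hmono : (∫ t in (0:ℝ)..1, f ((a - b) * t + b)) ≤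
        ∫ t in (0:ℝ)..1, (h t * f a + h (1 - t) * f b) := by
      apply intervalIntegral.integral_mono_ae_restrict (by norm_num) hg1 hcmp
      rw [← MeasureTheory.restrict_Ioo_eq_restrict_Icc]
      filter_upwards [ae_restrict_mem measurableSet_Ioo] with t ht
      have := hconv.2 a ha b hb t ht
      have e : (a - b) * t + b = t * a + (1 - t) * b := by ring
      rw [e]
      exact this
    calc (∫ t in (0:ℝ)..1, f ((a - b) * t + b))
        ≤ ∫ t in (0:ℝ)..1, (h t * f a + h (1 - t) * f b) := hmono
      _ = (f a + f b) * ∫ t in (0:ℝ)..1, h t := by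
          rw [intervalIntegral.integral_add (hhint.mul_const _) (hh1int.mul_const _),
            intervalIntegral.integral_mul_const, intervalIntegral.integral_mul_const, hhsym]
          ring
end

section
/- Let f be differentiable on I° with f' integrable on [a,b], a < b, α,λ ∈ [0,1], q ≥ 1, and |f'|^q h-convex on [a,b]. Set γ₁ = (1-α)(αλ - (1-α)/2), γ₂ = (αλ)² - γ₁, υ₁ = (1-(1-α)²)/2 - α(1-λ(1-α)), υ₂ = (1+(1-α)²)/2 - (λ+1)(1-α)(1-λ(1-α)), A = |f'(b)|^q ∫₀^{1-α}|t-αλ| h(t) dt + |f'(a)|^q ∫₀^{1-α}|t-αλ| h(1-t) dt, B = |f'(b)|^q ∫_{1-α}^1 |t-1+λ(1-α)| h(t) dt + |f'(a)|^q ∫_{1-α}^1 |t-1+λ(1-α)| h(1-t) dt. If αλ ≤ 1-α ≤ 1-λ(1-α), then |λ(αf(a)+(1-α)f(b)) + (1-λ)f(αa+(1-α)b) - (1/(b-a))∫ₐᵇ f(x)dx| ≤ (b-a)[γ₂^{1-1/q} A^{1/q} + υ₂^{1-1/q} B^{1/q}]. -/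
open MeasureTheory

open Set
open scoped ENNReal NNReal

lemma memLp_of_pow_integrable {μ : Measure ℝ} {G : ℝ → ℝ} {r : ℝ} (hr : 0 < r)
    (hG : AEStronglyMeasurable G μ) (hint : Integrable (fun t => |G t| ^ r) μ) :
    MemLp G (ENNReal.ofReal r) μ := by
  refine ⟨hG, ?_⟩
  rw [eLpNorm_eq_lintegral_rpow_enorm_toReal (by simp [ENNReal.ofReal_eq_zero]; linarith)
    ENNReal.ofReal_ne_top, ENNReal.toReal_ofReal hr.le]
  refine ENNReal.rpow_lt_top_of_nonneg (by positivity) ?_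
  have h2 := (hasFiniteIntegral_iff_ofReal
    (Filter.Eventually.of_forall fun t => Real.rpow_nonneg (abs_nonneg _) r)).1 hint.2
  have heq : ∀ t, (‖G t‖ₑ) ^ r = ENNReal.ofReal (|G t| ^ r) := by
    intro t
    rw [← ofReal_norm_eq_enorm, Real.norm_eq_abs,
      ENNReal.ofReal_rpow_of_nonneg (abs_nonneg _) hr.le]
  simp only [heq]
  exact h2.ne

/-- Weighted Hölder inequality. -/
lemma weighted_holder {μ : Measure ℝ} {w F : ℝ → ℝ} {q : ℝ} (hq : 1 ≤ q)
    (hw : 0 ≤ᵐ[μ] w) (hF : 0 ≤ᵐ[μ] F) (hwint : Integrable w μ)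
    (hmF : AEStronglyMeasurable F μ) (hwFq : Integrable (fun t => w t * F t ^ q) μ) :
    ∫ t, w t * F t ∂μ ≤ (∫ t, w t ∂μ) ^ (1 - 1/q) * (∫ t, w t * F t ^ q ∂μ) ^ (1/q) := by
  rcases eq_or_lt_of_le hq with hq1 | hq1
  · subst hq1
    simp [Real.rpow_one]
  · set p : ℝ := q / (q - 1) with hp
    have hpq : p.HolderConjugate q := ((Real.holderConjugate_iff_eq_conjExponent hq1).2 rfl).symm
    have hq0 : (0:ℝ) < q := lt_trans one_pos hq1
    have hp0 : (0:ℝ) < p := hpq.pos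
    have h1p : 1 - 1/q = 1/p := by
      have := hpq.inv_add_inv_eq_one
      field_simp at this ⊢
      linarith [this]
    have hwmeas : AEStronglyMeasurable w μ := hwint.1
    have hg2meas : AEStronglyMeasurable (fun t => w t ^ (1/q) * F t) μ :=
      (hwmeas.aemeasurable.pow_const (1/q)).aestronglyMeasurable.mul hmF
    -- pointwise identities (a.e.)
    have hae1 : (fun t => |w t ^ (1/p)| ^ p) =ᵐ[μ] w := by
      filter_upwards [hw] with t ht
      rw [abs_of_nonneg (Real.rpow_nonneg ht _), ← Real.rpow_mul ht,
        one_div_mul_cancel hp0.ne', Real.rpow_one]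
    have hae2 : (fun t => |w t ^ (1/q) * F t| ^ q) =ᵐ[μ] fun t => w t * F t ^ q := by
      filter_upwards [hw, hF] with t ht htF
      rw [abs_of_nonneg (mul_nonneg (Real.rpow_nonneg ht _) htF),
        Real.mul_rpow (Real.rpow_nonneg ht _) htF, ← Real.rpow_mul ht,
        one_div_mul_cancel hq0.ne', Real.rpow_one]
    have hMw : MemLp (fun t => w t ^ (1/p)) (ENNReal.ofReal p) μ :=
      memLp_of_pow_integrable hp0 (hwmeas.aemeasurable.pow_const _).aestronglyMeasurable
        (hwint.congr hae1.symm)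
    have hMg : MemLp (fun t => w t ^ (1/q) * F t) (ENNReal.ofReal q) μ :=
      memLp_of_pow_integrable hq0 hg2meas (hwFq.congr hae2.symm)
    have hwpos : 0 ≤ᵐ[μ] fun t => w t ^ (1/p) := by
      filter_upwards [hw] with t ht; exact Real.rpow_nonneg ht _
    have hgpos : 0 ≤ᵐ[μ] fun t => w t ^ (1/q) * F t := by
      filter_upwards [hw, hF] with t ht htF; exact mul_nonneg (Real.rpow_nonneg ht _) htF
    have hsum : 1/p + 1/q = 1 := by simpa [one_div] using hpq.inv_add_inv_eq_one
    have key := integral_mul_le_Lp_mul_Lq_of_nonneg hpq hwpos hgpos hMw hMg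
    have hprod : (fun t => w t ^ (1/p) * (w t ^ (1/q) * F t)) =ᵐ[μ] fun t => w t * F t := by
      filter_upwards [hw] with t ht
      rw [← mul_assoc, ← Real.rpow_add' ht (by rw [hsum]; norm_num), hsum, Real.rpow_one]
    have hae1' : (fun t => (w t ^ (1/p)) ^ p) =ᵐ[μ] w := by
      filter_upwards [hw] with t ht
      rw [← Real.rpow_mul ht, one_div_mul_cancel hp0.ne', Real.rpow_one]
    have hae2' : (fun t => (w t ^ (1/q) * F t) ^ q) =ᵐ[μ] fun t => w t * F t ^ q := by
      filter_upwards [hw, hF] with t ht htF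
      rw [Real.mul_rpow (Real.rpow_nonneg ht _) htF, ← Real.rpow_mul ht,
        one_div_mul_cancel hq0.ne', Real.rpow_one]
    calc ∫ t, w t * F t ∂μ = ∫ t, w t ^ (1/p) * (w t ^ (1/q) * F t) ∂μ :=
          (integral_congr_ae hprod).symm
      _ ≤ (∫ t, (w t ^ (1/p)) ^ p ∂μ) ^ (1/p) * (∫ t, (w t ^ (1/q) * F t) ^ q ∂μ) ^ (1/q) := key
      _ = (∫ t, w t ∂μ) ^ (1 - 1/q) * (∫ t, w t * F t ^ q ∂μ) ^ (1/q) := by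
          rw [integral_congr_ae hae1', integral_congr_ae hae2', h1p]

lemma piece_bound {μ : Measure ℝ} {w F G : ℝ → ℝ} {q : ℝ} (hq : 1 ≤ q)
    (hw : 0 ≤ᵐ[μ] w) (hF : 0 ≤ᵐ[μ] F) (hwint : Integrable w μ)
    (hmF : AEStronglyMeasurable F μ) (hGint : Integrable G μ)
    (hle : ∀ᵐ t ∂μ, w t * F t ^ q ≤ G t) :
    ∫ t, w t * F t ∂μ ≤ (∫ t, w t ∂μ) ^ (1 - 1/q) * (∫ t, G t ∂μ) ^ (1/q) := by
  have hmeas : AEStronglyMeasurable (fun t => w t * F t ^ q) μ :=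
    hwint.1.mul (hmF.aemeasurable.pow_const q).aestronglyMeasurable
  have hnn : 0 ≤ᵐ[μ] fun t => w t * F t ^ q := by
    filter_upwards [hw, hF] with t ht htF
    exact mul_nonneg ht (Real.rpow_nonneg htF q)
  have hwFq : Integrable (fun t => w t * F t ^ q) μ := by
    refine hGint.mono' hmeas ?_
    filter_upwards [hnn, hle] with t h1 h2
    rwa [Real.norm_of_nonneg h1]
  calc ∫ t, w t * F t ∂μ
      ≤ (∫ t, w t ∂μ) ^ (1 - 1/q) * (∫ t, w t * F t ^ q ∂μ) ^ (1/q) :=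
        weighted_holder hq hw hF hwint hmF hwFq
    _ ≤ (∫ t, w t ∂μ) ^ (1 - 1/q) * (∫ t, G t ∂μ) ^ (1/q) := by
        refine mul_le_mul_of_nonneg_left ?_ (Real.rpow_nonneg (integral_nonneg_of_ae hw) _)
        exact Real.rpow_le_rpow (integral_nonneg_of_ae hnn)
          (integral_mono_ae hwFq hGint hle) (by positivity)

lemma abs_kernel_integral {u v m : ℝ} (h1 : u ≤ m) (h2 : m ≤ v) :
    (∫ t in u..v, |t - m|) = (m - u)^2/2 + (v - m)^2/2 := by
  have i1 : IntervalIntegrable (fun t => |t - m|) volume u m :=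
    (continuous_abs.comp (continuous_id.sub continuous_const)).intervalIntegrable _ _
  have i2 : IntervalIntegrable (fun t => |t - m|) volume m v :=
    (continuous_abs.comp (continuous_id.sub continuous_const)).intervalIntegrable _ _
  rw [← intervalIntegral.integral_add_adjacent_intervals i1 i2]
  have e1 : (∫ t in u..m, |t - m|) = ∫ t in u..m, (m - t) := by
    apply intervalIntegral.integral_congr
    intro t ht
    rw [uIcc_of_le h1] at ht
    show |t - m| = m - t
    rw [abs_of_nonpos (by linarith [ht.2])]; ring
  have e2 : (∫ t in m..v, |t - m|) = ∫ t in m..v, (t - m) := by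
    apply intervalIntegral.integral_congr
    intro t ht
    rw [uIcc_of_le h2] at ht
    show |t - m| = t - m
    rw [abs_of_nonneg (by linarith [ht.1])]
  rw [e1, e2]
  rw [intervalIntegral.integral_sub (intervalIntegrable_const) (intervalIntegral.intervalIntegrable_id),
    intervalIntegral.integral_sub (intervalIntegral.intervalIntegrable_id) (intervalIntegrable_const),
    integral_id, integral_id,
    intervalIntegral.integral_const, intervalIntegral.integral_const]
  simp only [smul_eq_mul]
  ring

lemma ae_mem_Ioo_of_Ioc {u v : ℝ} (h0 : 0 ≤ u) (h1 : v ≤ 1) :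
    ∀ᵐ t ∂(volume.restrict (Ioc u v)), t ∈ Ioo (0:ℝ) 1 := by
  rw [ae_restrict_iff' measurableSet_Ioc, ae_iff]
  refine measure_mono_null (fun t ht => ?_) (Real.volume_singleton (a := 1))
  simp only [mem_setOf_eq, not_forall, mem_Ioc, mem_Ioo, not_and_or, not_lt, not_le] at ht
  obtain ⟨⟨htu, htv⟩, hor⟩ := ht
  have : t = 1 := by rcases hor with h' | h' <;> [linarith; linarith]
  simp [this]

section helpers
variable {a b : ℝ} {f' : ℝ → ℝ}

lemma affine_comp_intervalIntegrable (hint : IntervalIntegrable f' volume a b) (hab : a < b) :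
    IntervalIntegrable (fun t => f' ((b - a) * t + a)) volume 0 1 := by
  have h1 : IntervalIntegrable (fun x => f' (x + a)) volume 0 (b - a) := by
    simpa using hint.comp_add_right a
  have h2 := h1.comp_mul_left (c := b - a)
  have hba : b - a ≠ 0 := by linarith
  simpa [hba, fun t : ℝ => add_comm a ((b-a)*t)] using h2
end helpers

lemma piece_main {h f' : ℝ → ℝ} {a b q : ℝ} (hab : a < b) (hq : 1 ≤ q)
    (hhint : IntervalIntegrable h volume 0 1)
    (hint : IntervalIntegrable f' volume a b)
    (hconv : ∀ t ∈ Set.Ioo (0:ℝ) 1,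
      |f' (t * b + (1 - t) * a)| ^ q ≤ h t * |f' b| ^ q + h (1 - t) * |f' a| ^ q)
    {u v m : ℝ} (h0u : 0 ≤ u) (huv : u ≤ v) (hv1 : v ≤ 1) :
    (∫ t in u..v, |t - m| * |f' ((b - a) * t + a)|)
      ≤ (∫ t in u..v, |t - m|) ^ (1 - 1/q) *
        (|f' b| ^ q * (∫ t in u..v, |t - m| * h t)
          + |f' a| ^ q * ∫ t in u..v, |t - m| * h (1 - t)) ^ (1/q) := by
  have hsub : uIcc u v ⊆ uIcc (0:ℝ) 1 := by
    rw [uIcc_of_le huv, uIcc_of_le (by norm_num : (0:ℝ) ≤ 1)]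
    exact Icc_subset_Icc h0u hv1
  have hcontw : Continuous fun t : ℝ => |t - m| :=
    continuous_abs.comp (continuous_id.sub continuous_const)
  -- integrability of weighted h pieces
  have iwh : IntegrableOn (fun t => |t - m| * h t) (Ioc u v) := by
    rw [← intervalIntegrable_iff_integrableOn_Ioc_of_le huv]
    exact (hhint.mono_set hsub).continuousOn_mul hcontw.continuousOn
  have hh2 : IntervalIntegrable (fun t => h (1 - t)) volume u v := by
    have := (hhint.comp_sub_left 1).symm
    norm_num at this
    exact this.mono_set hsub
  have iwh2 : IntegrableOn (fun t => |t - m| * h (1 - t)) (Ioc u v) := by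
    rw [← intervalIntegrable_iff_integrableOn_Ioc_of_le huv]
    exact hh2.continuousOn_mul hcontw.continuousOn
  have hφint : IntervalIntegrable (fun t => f' ((b - a) * t + a)) volume u v :=
    (affine_comp_intervalIntegrable hint hab).mono_set hsub
  have hφOn : IntegrableOn (fun t => f' ((b - a) * t + a)) (Ioc u v) :=
    (intervalIntegrable_iff_integrableOn_Ioc_of_le huv).1 hφint
  set μ := volume.restrict (Ioc u v) with hμ
  have hmF : AEStronglyMeasurable (fun t => |f' ((b - a) * t + a)|) μ :=
    hφOn.aestronglyMeasurable.norm
  have hGint : Integrable (fun t => |f' b| ^ q * (|t - m| * h t)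
      + |f' a| ^ q * (|t - m| * h (1 - t))) μ :=
    (iwh.const_mul _).add (iwh2.const_mul _)
  have hwint : Integrable (fun t => |t - m|) μ := by
    rw [hμ, ← IntegrableOn, ← intervalIntegrable_iff_integrableOn_Ioc_of_le huv]
    exact hcontw.intervalIntegrable u v
  have hle : ∀ᵐ t ∂μ, |t - m| * |f' ((b - a) * t + a)| ^ q
      ≤ |f' b| ^ q * (|t - m| * h t) + |f' a| ^ q * (|t - m| * h (1 - t)) := by
    filter_upwards [ae_mem_Ioo_of_Ioc h0u hv1] with t ht
    have haff : (b - a) * t + a = t * b + (1 - t) * a := by ring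
    have hc := hconv t ht
    rw [haff]
    have h2 := mul_le_mul_of_nonneg_left hc (abs_nonneg (t - m))
    calc |t - m| * |f' (t * b + (1 - t) * a)| ^ q
        ≤ |t - m| * (h t * |f' b| ^ q + h (1 - t) * |f' a| ^ q) := h2
      _ = |f' b| ^ q * (|t - m| * h t) + |f' a| ^ q * (|t - m| * h (1 - t)) := by ring
  have key := piece_bound hq (Filter.Eventually.of_forall fun t => abs_nonneg _)
    (Filter.Eventually.of_forall fun t => abs_nonneg _) hwint hmF hGint hle
  rw [intervalIntegral.integral_of_le huv, intervalIntegral.integral_of_le huv,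
    intervalIntegral.integral_of_le huv, intervalIntegral.integral_of_le huv]
  refine key.trans (le_of_eq ?_)
  congr 1
  rw [integral_add (iwh.const_mul _) (iwh2.const_mul _), integral_const_mul, integral_const_mul]

lemma ibp_kernel {g φ : ℝ → ℝ} {K u v m : ℝ}
    (hg : ∀ t ∈ uIcc u v, HasDerivAt g (K * φ t) t)
    (hφ : IntervalIntegrable (fun t => K * φ t) volume u v) :
    (∫ t in u..v, (t - m) * (K * φ t))
      = (v - m) * g v - (u - m) * g u - ∫ t in u..v, g t := by
  have hu : ∀ t ∈ uIcc u v, HasDerivAt (fun t => t - m) 1 t :=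
    fun t _ => (hasDerivAt_id t).sub_const m
  have := intervalIntegral.integral_mul_deriv_eq_deriv_mul hu hg
    (intervalIntegrable_const) hφ
  simpa using this


theorem stmt_2 (I : Set ℝ) (h f f' : ℝ → ℝ) (a b α l q γ₁ γ₂ υ₂ A B : ℝ)
    (hab : a < b) (hI : Set.Icc a b ⊆ interior I)
    (hα : α ∈ Set.Icc (0:ℝ) 1) (hl : l ∈ Set.Icc (0:ℝ) 1) (hq : 1 ≤ q)
    (hder : ∀ x ∈ interior I, HasDerivAt f (f' x) x)
    (hint : IntervalIntegrable f' volume a b)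
    (hh0 : ∀ t ∈ Set.Ioo (0:ℝ) 1, 0 ≤ h t) (hhne : h ≠ 0)
    (hhint : IntervalIntegrable h volume 0 1)
    (hconv : ∀ x ∈ Set.Icc a b, ∀ y ∈ Set.Icc a b, ∀ t ∈ Set.Ioo (0:ℝ) 1,
      |f' (t * x + (1 - t) * y)| ^ q ≤ h t * |f' x| ^ q + h (1 - t) * |f' y| ^ q)
    (hγ₁ : γ₁ = (1 - α) * (α * l - (1 - α) / 2))
    (hγ₂ : γ₂ = (α * l) ^ (2:ℕ) - γ₁)
    (hυ₂ : υ₂ = (1 + (1 - α) ^ (2:ℕ)) / 2 - (l + 1) * (1 - α) * (1 - l * (1 - α)))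
    (hA : A = |f' b| ^ q * (∫ t in (0:ℝ)..(1 - α), |t - α * l| * h t)
        + |f' a| ^ q * ∫ t in (0:ℝ)..(1 - α), |t - α * l| * h (1 - t))
    (hB : B = |f' b| ^ q * (∫ t in (1 - α)..(1:ℝ), |t - 1 + l * (1 - α)| * h t)
        + |f' a| ^ q * ∫ t in (1 - α)..(1:ℝ), |t - 1 + l * (1 - α)| * h (1 - t))
    (hcase₁ : α * l ≤ 1 - α) (hcase₂ : 1 - α ≤ 1 - l * (1 - α)) :
    |l * (α * f a + (1 - α) * f b) + (1 - l) * f (α * a + (1 - α) * b)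
        - (1 / (b - a)) * ∫ x in a..b, f x|
      ≤ (b - a) * (γ₂ ^ (1 - 1/q) * A ^ (1/q) + υ₂ ^ (1 - 1/q) * B ^ (1/q)) := by
  obtain ⟨hα0, hα1⟩ := hα
  obtain ⟨hl0, hl1⟩ := hl
  have hba : (0:ℝ) < b - a := by linarith
  have hc0 : (0:ℝ) ≤ 1 - α := by linarith
  have hc1 : (1:ℝ) - α ≤ 1 := by linarith
  have hm10 : 0 ≤ α * l := mul_nonneg hα0 hl0
  have hm21 : 1 - l * (1 - α) ≤ 1 := by nlinarith
  have hmem : ∀ t ∈ Icc (0:ℝ) 1, (b - a) * t + a ∈ Icc a b := by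
    rintro t ⟨h0, h1⟩
    constructor <;> nlinarith
  have hgder : ∀ t ∈ Icc (0:ℝ) 1,
      HasDerivAt (fun t => f ((b - a) * t + a)) ((b - a) * f' ((b - a) * t + a)) t := by
    intro t ht
    have h1 : HasDerivAt (fun t : ℝ => (b - a) * t + a) (b - a) t := by
      simpa using ((hasDerivAt_id t).const_mul (b - a)).add_const a
    have h2 := (hder _ (hI (hmem t ht))).comp t h1
    simpa [mul_comm, Function.comp_def] using h2
  have hgcont : ContinuousOn (fun t => f ((b - a) * t + a)) (Icc 0 1) :=
    fun t ht => (hgder t ht).continuousAt.continuousWithinAt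
  have hφ01 : IntervalIntegrable (fun t => f' ((b - a) * t + a)) volume 0 1 :=
    affine_comp_intervalIntegrable hint hab
  have hsub1 : uIcc (0:ℝ) (1 - α) ⊆ uIcc (0:ℝ) 1 := by
    rw [uIcc_of_le hc0, uIcc_of_le zero_le_one]
    exact Icc_subset_Icc le_rfl hc1
  have hsub2 : uIcc (1 - α) (1:ℝ) ⊆ uIcc (0:ℝ) 1 := by
    rw [uIcc_of_le hc1, uIcc_of_le zero_le_one]
    exact Icc_subset_Icc hc0 le_rfl
  have hsubI1 : uIcc (0:ℝ) (1 - α) ⊆ Icc (0:ℝ) 1 := by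
    rwa [uIcc_of_le zero_le_one] at hsub1
  have hsubI2 : uIcc (1 - α) (1:ℝ) ⊆ Icc (0:ℝ) 1 := by
    rwa [uIcc_of_le zero_le_one] at hsub2
  have IBP1 := ibp_kernel (g := fun t => f ((b - a) * t + a))
    (φ := fun t => f' ((b - a) * t + a)) (K := b - a) (u := 0) (v := 1 - α) (m := α * l)
    (fun t ht => hgder t (hsubI1 ht)) ((hφ01.mono_set hsub1).const_mul _)
  have IBP2 := ibp_kernel (g := fun t => f ((b - a) * t + a))
    (φ := fun t => f' ((b - a) * t + a)) (K := b - a) (u := 1 - α) (v := 1)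
    (m := 1 - l * (1 - α))
    (fun t ht => hgder t (hsubI2 ht)) ((hφ01.mono_set hsub2).const_mul _)
  have hgs : ((∫ t in (0:ℝ)..(1 - α), f ((b - a) * t + a))
      + ∫ t in (1 - α)..(1:ℝ), f ((b - a) * t + a))
      = (b - a)⁻¹ * ∫ x in a..b, f x := by
    rw [intervalIntegral.integral_add_adjacent_intervals
      ((hgcont.mono hsubI1).intervalIntegrable) ((hgcont.mono hsubI2).intervalIntegrable)]
    have := intervalIntegral.integral_comp_mul_add (a := (0:ℝ)) (b := (1:ℝ)) f
      (by positivity : b - a ≠ 0) a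
    norm_num at this
    rw [this]
  have hg0 : f ((b - a) * 0 + a) = f a := by norm_num
  have hg1 : f ((b - a) * 1 + a) = f b := by norm_num
  have hgc : f ((b - a) * (1 - α) + a) = f (α * a + (1 - α) * b) := by
    congr 1; ring
  have hid : l * (α * f a + (1 - α) * f b) + (1 - l) * f (α * a + (1 - α) * b)
      - (1 / (b - a)) * ∫ x in a..b, f x
      = (∫ t in (0:ℝ)..(1 - α), (t - α * l) * ((b - a) * f' ((b - a) * t + a)))
        + ∫ t in (1 - α)..(1:ℝ), (t - (1 - l * (1 - α))) * ((b - a) * f' ((b - a) * t + a)) := by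
    rw [IBP1, IBP2]
    simp only [hg0, hg1, hgc]
    have h1d : (1:ℝ) / (b - a) = (b - a)⁻¹ := one_div _
    rw [h1d]
    linear_combination hgs
  have hconvba : ∀ t ∈ Ioo (0:ℝ) 1,
      |f' (t * b + (1 - t) * a)| ^ q ≤ h t * |f' b| ^ q + h (1 - t) * |f' a| ^ q :=
    fun t ht => hconv b ⟨le_of_lt hab, le_rfl⟩ a ⟨le_rfl, le_of_lt hab⟩ t ht
  have hγ₂' : (∫ t in (0:ℝ)..(1 - α), |t - α * l|) = γ₂ := by
    rw [abs_kernel_integral hm10 hcase₁, hγ₂, hγ₁]; ring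
  have hυ₂' : (∫ t in (1 - α)..(1:ℝ), |t - (1 - l * (1 - α))|) = υ₂ := by
    rw [abs_kernel_integral hcase₂ hm21, hυ₂]; ring
  have hP1 : (∫ t in (0:ℝ)..(1 - α), |t - α * l| * |f' ((b - a) * t + a)|)
      ≤ γ₂ ^ (1 - 1/q) * A ^ (1/q) := by
    have := piece_main hab hq hhint hint hconvba (m := α * l) le_rfl hc0 hc1
    rwa [hγ₂', ← hA] at this
  have hBc1 : (∫ t in (1 - α)..(1:ℝ), |t - 1 + l * (1 - α)| * h t)
      = ∫ t in (1 - α)..(1:ℝ), |t - (1 - l * (1 - α))| * h t := by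
    apply intervalIntegral.integral_congr; intro t _
    have he : t - 1 + l * (1 - α) = t - (1 - l * (1 - α)) := by ring
    simp only [he]
  have hBc2 : (∫ t in (1 - α)..(1:ℝ), |t - 1 + l * (1 - α)| * h (1 - t))
      = ∫ t in (1 - α)..(1:ℝ), |t - (1 - l * (1 - α))| * h (1 - t) := by
    apply intervalIntegral.integral_congr; intro t _
    have he : t - 1 + l * (1 - α) = t - (1 - l * (1 - α)) := by ring
    simp only [he]
  have hP2 : (∫ t in (1 - α)..(1:ℝ), |t - (1 - l * (1 - α))| * |f' ((b - a) * t + a)|)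
      ≤ υ₂ ^ (1 - 1/q) * B ^ (1/q) := by
    have := piece_main hab hq hhint hint hconvba (m := 1 - l * (1 - α)) hc0 hc1 le_rfl
    rwa [hυ₂', ← hBc1, ← hBc2, ← hB] at this
  have hb1 : |∫ t in (0:ℝ)..(1 - α), (t - α * l) * ((b - a) * f' ((b - a) * t + a))|
      ≤ (b - a) * ∫ t in (0:ℝ)..(1 - α), |t - α * l| * |f' ((b - a) * t + a)| := by
    refine (intervalIntegral.abs_integral_le_integral_abs hc0).trans (le_of_eq ?_)
    rw [← intervalIntegral.integral_const_mul]
    apply intervalIntegral.integral_congr; intro t _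
    simp only [abs_mul, abs_of_pos hba]; ring
  have hb2 : |∫ t in (1 - α)..(1:ℝ), (t - (1 - l * (1 - α))) * ((b - a) * f' ((b - a) * t + a))|
      ≤ (b - a) * ∫ t in (1 - α)..(1:ℝ), |t - (1 - l * (1 - α))| * |f' ((b - a) * t + a)| := by
    refine (intervalIntegral.abs_integral_le_integral_abs hc1).trans (le_of_eq ?_)
    rw [← intervalIntegral.integral_const_mul]
    apply intervalIntegral.integral_congr; intro t _
    simp only [abs_mul, abs_of_pos hba]; ring
  rw [hid]
  refine (abs_add_le _ _).trans ?_
  refine (add_le_add hb1 hb2).trans ?_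
  refine ((add_le_add (mul_le_mul_of_nonneg_left hP1 hba.le)
    (mul_le_mul_of_nonneg_left hP2 hba.le))).trans (le_of_eq ?_)
  ring
end

section
/- Let f be differentiable on I° with f' integrable on [a,b], a < b, α,λ ∈ [0,1], q = 1, and |f'| h-convex on [a,b]. Then |λ(αf(a)+(1-α)f(b)) + (1-λ)f(αa+(1-α)b) - (1/(b-a))∫ₐᵇ f(x)dx| ≤ (b-a){|f'(b)|[∫₀^{1-α}|t-αλ| h(t)dt + ∫_{1-α}^1|t-1+λ(1-α)| h(t)dt] + |f'(a)|[∫₀^{1-α}|t-αλ| h(1-t)dt + ∫_{1-α}^1|t-1+λ(1-α)| h(1-t)dt]}. -/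
open MeasureTheory

theorem stmt_3 (I : Set ℝ) (h f f' : ℝ → ℝ) (a b α l : ℝ)
    (hab : a < b) (hI : Set.Icc a b ⊆ interior I)
    (hα : α ∈ Set.Icc (0:ℝ) 1) (hl : l ∈ Set.Icc (0:ℝ) 1)
    (hder : ∀ x ∈ interior I, HasDerivAt f (f' x) x)
    (hint : IntervalIntegrable f' volume a b)
    (hh0 : ∀ t ∈ Set.Ioo (0:ℝ) 1, 0 ≤ h t)
    (hhint : IntervalIntegrable h volume 0 1)
    (hconv : ∀ x ∈ Set.Icc a b, ∀ y ∈ Set.Icc a b, ∀ t ∈ Set.Ioo (0:ℝ) 1,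
      |f' (t * x + (1 - t) * y)| ≤ h t * |f' x| + h (1 - t) * |f' y|) :
    |l * (α * f a + (1 - α) * f b) + (1 - l) * f (α * a + (1 - α) * b)
        - (1 / (b - a)) * ∫ x in a..b, f x|
      ≤ (b - a) * (|f' b| * ((∫ t in (0:ℝ)..(1 - α), |t - α * l| * h t)
          + ∫ t in (1 - α)..(1:ℝ), |t - 1 + l * (1 - α)| * h t)
        + |f' a| * ((∫ t in (0:ℝ)..(1 - α), |t - α * l| * h (1 - t))
          + ∫ t in (1 - α)..(1:ℝ), |t - 1 + l * (1 - α)| * h (1 - t))) := by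
  have hc : (0:ℝ) < b - a := sub_pos.2 hab
  set F : ℝ → ℝ := fun t => f ((b - a) * t + a) with hF
  set F' : ℝ → ℝ := fun t => (b - a) * f' ((b - a) * t + a) with hF'
  have hmem : ∀ x ∈ Set.Icc (0:ℝ) 1, (b - a) * x + a ∈ Set.Icc a b := by
    intro x hx
    constructor
    · nlinarith [hx.1]
    · nlinarith [hx.2]
  have hFder : ∀ x ∈ Set.Icc (0:ℝ) 1, HasDerivAt F (F' x) x := by
    intro x hx
    have h1 : HasDerivAt (fun t : ℝ => (b - a) * t + a) (b - a) x := by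
      simpa using ((hasDerivAt_id x).const_mul (b - a)).add_const a
    have h2 : HasDerivAt (fun t => f ((b - a) * t + a))
        (f' ((b - a) * x + a) * (b - a)) x := (hder _ (hI (hmem x hx))).comp x h1
    have h4 : F' x = f' ((b - a) * x + a) * (b - a) := by rw [hF']; ring
    rw [h4]
    exact h2
  have hF'int : IntervalIntegrable F' volume 0 1 := by
    have h1 : IntervalIntegrable (fun x => f' (x + a)) volume 0 (b - a) := by
      simpa using hint.comp_add_right a
    have h2 : IntervalIntegrable (fun x => f' ((b - a) * x + a)) volume 0 1 := by
      have := h1.comp_mul_left (c := b - a)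
      simpa [hc.ne'] using this
    exact h2.const_mul (b - a)
  have hFcont : ContinuousOn F (Set.Icc 0 1) := by
    intro x hx
    exact ((hFder x hx).continuousAt).continuousWithinAt
  have h1t : IntervalIntegrable (fun t => h (1 - t)) volume 0 1 := by
    have := hhint.comp_sub_left 1
    simpa using this.symm
  obtain ⟨hα0, hα1⟩ := hα
  -- key : integration by parts
  have key1 : ∀ p q r : ℝ, 0 ≤ p → p ≤ q → q ≤ 1 →
      (∫ t in p..q, (t - r) * F' t)
        = (q - r) * F q - (p - r) * F p - ∫ t in p..q, F t := by
    intro p q r hp hpq hq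
    have hsub : Set.uIcc p q ⊆ Set.Icc 0 1 := by
      rw [Set.uIcc_of_le hpq]
      exact Set.Icc_subset_Icc hp hq
    have hsub' : Set.uIcc p q ⊆ Set.uIcc 0 1 := by
      rwa [Set.uIcc_of_le (zero_le_one)]
    have := intervalIntegral.integral_mul_deriv_eq_deriv_mul
      (u := fun t => t - r) (u' := fun _ => (1:ℝ)) (v := F) (v' := F')
      (fun x _ => (hasDerivAt_id x).sub_const r)
      (fun x hx => hFder x (hsub hx))
      intervalIntegrable_const
      (hF'int.mono_set hsub')
    simpa using this
  -- key2 : the bound on each piece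
  have key2 : ∀ p q r : ℝ, 0 ≤ p → p ≤ q → q ≤ 1 →
      |∫ t in p..q, (t - r) * F' t|
        ≤ (b - a) * (|f' b| * (∫ t in p..q, |t - r| * h t)
            + |f' a| * ∫ t in p..q, |t - r| * h (1 - t)) := by
    intro p q r hp hpq hq
    have hsub : Set.uIcc p q ⊆ Set.Icc 0 1 := by
      rw [Set.uIcc_of_le hpq]; exact Set.Icc_subset_Icc hp hq
    have hsub' : Set.uIcc p q ⊆ Set.uIcc 0 1 := by
      rwa [Set.uIcc_of_le (zero_le_one)]
    have hcontr : ContinuousOn (fun t : ℝ => |t - r|) (Set.uIcc p q) :=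
      (continuous_abs.comp (continuous_id.sub continuous_const)).continuousOn
    have hFi : IntervalIntegrable F' volume p q := hF'int.mono_set hsub'
    have hhi : IntervalIntegrable h volume p q := hhint.mono_set hsub'
    have h1i : IntervalIntegrable (fun t => h (1 - t)) volume p q := h1t.mono_set hsub'
    have hcontr0 : ContinuousOn (fun t : ℝ => t - r) (Set.uIcc p q) :=
      (continuous_id.sub continuous_const).continuousOn
    have iL : IntervalIntegrable (fun t => |(t - r) * F' t|) volume p q :=
      (hFi.continuousOn_mul hcontr0).abs
    have i1 : IntervalIntegrable (fun t => |t - r| * h t) volume p q :=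
      hhi.continuousOn_mul hcontr
    have i2 : IntervalIntegrable (fun t => |t - r| * h (1 - t)) volume p q :=
      h1i.continuousOn_mul hcontr
    have iR : IntervalIntegrable
        (fun t => |t - r| * ((b - a) * (h t * |f' b| + h (1 - t) * |f' a|))) volume p q := by
      have : IntervalIntegrable (fun t => (b - a) * (h t * |f' b| + h (1 - t) * |f' a|))
          volume p q := (((hhi.mul_const _).add (h1i.mul_const _)).const_mul _)
      exact this.continuousOn_mul hcontr
    have hae : ∀ᵐ t ∂(volume.restrict (Set.Icc p q)),
        |(t - r) * F' t| ≤ |t - r| * ((b - a) * (h t * |f' b| + h (1 - t) * |f' a|)) := by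
      have hne0 : ∀ᵐ t ∂(volume : Measure ℝ), t ≠ 0 := by
        rw [MeasureTheory.ae_iff]
        simpa using Real.volume_singleton (a := 0)
      have hne1 : ∀ᵐ t ∂(volume : Measure ℝ), t ≠ 1 := by
        rw [MeasureTheory.ae_iff]
        simpa using Real.volume_singleton (a := 1)
      have hmem' := MeasureTheory.ae_restrict_mem (μ := volume) (measurableSet_Icc (a := p) (b := q))
      filter_upwards [hmem', MeasureTheory.ae_restrict_of_ae hne0,
          MeasureTheory.ae_restrict_of_ae hne1] with t ht ht0 ht1
      have htI : t ∈ Set.Ioo (0:ℝ) 1 := by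
        constructor
        · rcases lt_or_eq_of_le (hp.trans ht.1) with h' | h'
          · exact h'
          · exact absurd h'.symm ht0
        · rcases lt_or_eq_of_le (ht.2.trans hq) with h' | h'
          · exact h'
          · exact absurd h' ht1
      have hb := hconv b (Set.right_mem_Icc.2 hab.le) a (Set.left_mem_Icc.2 hab.le) t htI
      have harg : t * b + (1 - t) * a = (b - a) * t + a := by ring
      rw [harg] at hb
      have : |F' t| = (b - a) * |f' ((b - a) * t + a)| := by
        rw [hF', abs_mul, abs_of_pos hc]
      rw [abs_mul, this]
      exact mul_le_mul_of_nonneg_left (mul_le_mul_of_nonneg_left hb hc.le) (abs_nonneg _)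
    calc |∫ t in p..q, (t - r) * F' t|
        ≤ ∫ t in p..q, |(t - r) * F' t| :=
          intervalIntegral.abs_integral_le_integral_abs hpq
      _ ≤ ∫ t in p..q, |t - r| * ((b - a) * (h t * |f' b| + h (1 - t) * |f' a|)) :=
          intervalIntegral.integral_mono_ae_restrict hpq iL iR hae
      _ = ∫ t in p..q, (((b - a) * |f' b|) * (|t - r| * h t)
            + ((b - a) * |f' a|) * (|t - r| * h (1 - t))) := by
          apply intervalIntegral.integral_congr
          intro t _
          ring
      _ = ((b - a) * |f' b|) * (∫ t in p..q, |t - r| * h t)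
            + ((b - a) * |f' a|) * ∫ t in p..q, |t - r| * h (1 - t) := by
          rw [intervalIntegral.integral_add (i1.const_mul _) (i2.const_mul _),
            intervalIntegral.integral_const_mul, intervalIntegral.integral_const_mul]
      _ = (b - a) * (|f' b| * (∫ t in p..q, |t - r| * h t)
            + |f' a| * ∫ t in p..q, |t - r| * h (1 - t)) := by ring
  have h1α0 : (0:ℝ) ≤ 1 - α := by linarith [hl.1, hα1]
  have h1α1 : (1:ℝ) - α ≤ 1 := by linarith
  have e1 := key1 0 (1 - α) (α * l) le_rfl h1α0 h1α1
  have e2 := key1 (1 - α) 1 (1 - l * (1 - α)) h1α0 h1α1 le_rfl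
  have b1 := key2 0 (1 - α) (α * l) le_rfl h1α0 h1α1
  have b2 := key2 (1 - α) 1 (1 - l * (1 - α)) h1α0 h1α1 le_rfl
  have hFiA : IntervalIntegrable F volume 0 (1 - α) :=
    (hFcont.mono (by rw [Set.uIcc_of_le h1α0]; exact Set.Icc_subset_Icc le_rfl h1α1)).intervalIntegrable
  have hFiB : IntervalIntegrable F volume (1 - α) 1 :=
    (hFcont.mono (by rw [Set.uIcc_of_le h1α1]; exact Set.Icc_subset_Icc h1α0 le_rfl)).intervalIntegrable
  have hsplit : (∫ t in (0:ℝ)..(1 - α), F t) + ∫ t in (1 - α)..(1:ℝ), F t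
      = ∫ t in (0:ℝ)..(1:ℝ), F t :=
    intervalIntegral.integral_add_adjacent_intervals hFiA hFiB
  have hsubst : (∫ t in (0:ℝ)..(1:ℝ), F t) = (b - a)⁻¹ * ∫ x in a..b, f x := by
    rw [hF]
    rw [intervalIntegral.integral_comp_mul_add f hc.ne' a]
    norm_num
  have hfa : F 0 = f a := by simp [hF]
  have hfb : F 1 = f b := by rw [hF]; norm_num
  have hfm : F (1 - α) = f (α * a + (1 - α) * b) := by
    rw [hF]; ring_nf
  have hkey : l * (α * f a + (1 - α) * f b) + (1 - l) * f (α * a + (1 - α) * b)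
      - (1 / (b - a)) * ∫ x in a..b, f x
      = (∫ t in (0:ℝ)..(1 - α), (t - α * l) * F' t)
        + ∫ t in (1 - α)..(1:ℝ), (t - (1 - l * (1 - α))) * F' t := by
    rw [e1, e2, hfa, hfb, hfm]
    have : (1 / (b - a)) * ∫ x in a..b, f x
        = (∫ t in (0:ℝ)..(1 - α), F t) + ∫ t in (1 - α)..(1:ℝ), F t := by
      rw [hsplit, hsubst]; ring
    rw [this]
    ring
  rw [hkey]
  have habs : |(∫ t in (0:ℝ)..(1 - α), (t - α * l) * F' t)
        + ∫ t in (1 - α)..(1:ℝ), (t - (1 - l * (1 - α))) * F' t|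
      ≤ |∫ t in (0:ℝ)..(1 - α), (t - α * l) * F' t|
        + |∫ t in (1 - α)..(1:ℝ), (t - (1 - l * (1 - α))) * F' t| := abs_add_le _ _
  have hcong1 : (∫ t in (1 - α)..(1:ℝ), |t - 1 + l * (1 - α)| * h t)
      = ∫ t in (1 - α)..(1:ℝ), |t - (1 - l * (1 - α))| * h t := by
    apply intervalIntegral.integral_congr
    intro t _
    show |t - 1 + l * (1 - α)| * h t = |t - (1 - l * (1 - α))| * h t
    rw [show t - 1 + l * (1 - α) = t - (1 - l * (1 - α)) from by ring]
  have hcong2 : (∫ t in (1 - α)..(1:ℝ), |t - 1 + l * (1 - α)| * h (1 - t))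
      = ∫ t in (1 - α)..(1:ℝ), |t - (1 - l * (1 - α))| * h (1 - t) := by
    apply intervalIntegral.integral_congr
    intro t _
    show |t - 1 + l * (1 - α)| * h (1 - t) = |t - (1 - l * (1 - α))| * h (1 - t)
    rw [show t - 1 + l * (1 - α) = t - (1 - l * (1 - α)) from by ring]
  rw [hcong1, hcong2]
  calc _ ≤ _ := habs
    _ ≤ (b - a) * (|f' b| * (∫ t in (0:ℝ)..(1 - α), |t - α * l| * h t)
            + |f' a| * ∫ t in (0:ℝ)..(1 - α), |t - α * l| * h (1 - t))
        + (b - a) * (|f' b| * (∫ t in (1 - α)..(1:ℝ), |t - (1 - l * (1 - α))| * h t)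
            + |f' a| * ∫ t in (1 - α)..(1:ℝ), |t - (1 - l * (1 - α))| * h (1 - t)) :=
      add_le_add b1 b2
    _ = _ := by ring
end

section
/- Let f be differentiable on I° with f' integrable on [a,b], a < b, q ≥ 1, and |f'|^q s-convex in the second sense on [a,b] for some s ∈ (0,1]. Then the midpoint inequality holds: |f((a+b)/2) - (1/(b-a))∫ₐᵇ f(x)dx| ≤ ((b-a)/8)(2/((s+1)(s+2)))^{1/q} · { (2^{1-s}(s+1)/2 |f'(b)|^q + 2^{1-s}(2^{s+2}-s-3)/2 |f'(a)|^q)^{1/q} + (2^{1-s}(s+1)/2 |f'(a)|^q + 2^{1-s}(2^{s+2}-s-3)/2 |f'(b)|^q)^{1/q} }. -/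
open MeasureTheory

lemma holder_weight {μ : Measure ℝ} {w g : ℝ → ℝ} {q : ℝ} (hq : 1 ≤ q)
    (hw0 : 0 ≤ᵐ[μ] w) (hg0 : 0 ≤ᵐ[μ] g) (hgm : AEMeasurable g μ)
    (hw : Integrable w μ) (hwgq : Integrable (fun x => w x * g x ^ q) μ) :
    ∫ x, w x * g x ∂μ ≤ (∫ x, w x ∂μ) ^ (1 - 1/q) * (∫ x, w x * g x ^ q ∂μ) ^ (1/q) := by
  rcases eq_or_lt_of_le hq with h1 | hq1
  · subst h1
    simp only [one_div, inv_one, sub_self, Real.rpow_zero, one_mul, Real.rpow_one]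
    exact le_rfl
  · set p : ℝ := q.conjExponent with hp
    have hpq : p.HolderConjugate q := (Real.HolderConjugate.conjExponent hq1).symm
    have hp_pos : 0 < p := hpq.pos
    have hq_pos : 0 < q := hpq.symm.pos
    have h1pq : 1/p + 1/q = 1 := by
      rw [one_div, one_div]; exact hpq.inv_add_inv_eq_one
    set F : ℝ → ℝ := fun x => (w x) ^ (1/p) with hF
    set G : ℝ → ℝ := fun x => (w x) ^ (1/q) * g x with hG
    have hFnn : 0 ≤ᵐ[μ] F := by
      filter_upwards [hw0] with x hx
      exact Real.rpow_nonneg hx _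
    have hGnn : 0 ≤ᵐ[μ] G := by
      filter_upwards [hw0, hg0] with x hx hgx
      exact mul_nonneg (Real.rpow_nonneg hx _) hgx
    have hFp : (fun x => F x ^ p) =ᵐ[μ] w := by
      filter_upwards [hw0] with x hx
      show (w x ^ (1/p)) ^ p = w x
      rw [← Real.rpow_mul hx, one_div, inv_mul_cancel₀ hp_pos.ne', Real.rpow_one]
    have hGq : (fun x => G x ^ q) =ᵐ[μ] fun x => w x * g x ^ q := by
      filter_upwards [hw0, hg0] with x hx hgx
      show (w x ^ (1/q) * g x) ^ q = w x * g x ^ q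
      rw [Real.mul_rpow (Real.rpow_nonneg hx _) hgx, ← Real.rpow_mul hx,
        one_div, inv_mul_cancel₀ hq_pos.ne', Real.rpow_one]
    have hFG : (fun x => F x * G x) =ᵐ[μ] fun x => w x * g x := by
      filter_upwards [hw0] with x hx
      show w x ^ (1/p) * (w x ^ (1/q) * g x) = w x * g x
      rw [← mul_assoc, ← Real.rpow_add' hx (by rw [h1pq]; norm_num), h1pq, Real.rpow_one]
    have hwm : AEMeasurable w μ := hw.aemeasurable
    have hFm : AEStronglyMeasurable F μ := (hwm.pow aemeasurable_const).aestronglyMeasurable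
    have hGm : AEStronglyMeasurable G μ :=
      ((hwm.pow aemeasurable_const).mul hgm).aestronglyMeasurable
    have hFL : MemLp F (ENNReal.ofReal p) μ := by
      have h0 : (ENNReal.ofReal p) ≠ 0 := by simp [hp_pos]
      have ht : (ENNReal.ofReal p) ≠ ⊤ := ENNReal.ofReal_ne_top
      have hiff := memLp_norm_rpow_iff (p := ENNReal.ofReal p) (q := ENNReal.ofReal p) hFm h0 ht
      rw [ENNReal.div_self h0 ht] at hiff
      refine hiff.mp ?_
      rw [memLp_one_iff_integrable]
      apply hw.congr
      filter_upwards [hFp, hFnn] with x hx hnn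
      rw [← hx, Real.norm_of_nonneg hnn, ENNReal.toReal_ofReal hp_pos.le]
    have hGL : MemLp G (ENNReal.ofReal q) μ := by
      have h0 : (ENNReal.ofReal q) ≠ 0 := by simp [hq_pos]
      have ht : (ENNReal.ofReal q) ≠ ⊤ := ENNReal.ofReal_ne_top
      have hiff := memLp_norm_rpow_iff (p := ENNReal.ofReal q) (q := ENNReal.ofReal q) hGm h0 ht
      rw [ENNReal.div_self h0 ht] at hiff
      refine hiff.mp ?_
      rw [memLp_one_iff_integrable]
      apply hwgq.congr
      filter_upwards [hGq, hGnn] with x hx hnn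
      rw [← hx, Real.norm_of_nonneg hnn, ENNReal.toReal_ofReal hq_pos.le]
    have H := MeasureTheory.integral_mul_le_Lp_mul_Lq_of_nonneg hpq hFnn hGnn hFL hGL
    rw [integral_congr_ae hFG, integral_congr_ae hFp, integral_congr_ae hGq] at H
    have hpe : 1/p = 1 - 1/q := by linarith
    rw [hpe] at H
    exact H

lemma key (f' : ℝ → ℝ) (a b s q : ℝ) (hab : a < b)
    (hs : s ∈ Set.Ioc (0:ℝ) 1) (hq : 1 ≤ q)
    (hint : IntervalIntegrable f' volume a b)
    (hconv : ∀ x ∈ Set.Icc a b, ∀ y ∈ Set.Icc a b, ∀ t ∈ Set.Icc (0:ℝ) 1,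
      |f' (t * x + (1 - t) * y)| ^ q ≤ t ^ s * |f' x| ^ q + (1 - t) ^ s * |f' y| ^ q) :
    ∫ x in a..(a+b)/2, (x - a) * |f' x|
      ≤ ((b-a)^2/8) ^ (1 - 1/q) *
        (((b-a)^2/8) * (2 / ((s+1)*(s+2))) *
          ((2:ℝ)^(1-s) * (s+1) / 2 * |f' b| ^ q
            + (2:ℝ)^(1-s) * ((2:ℝ)^(s+2) - s - 3) / 2 * |f' a| ^ q)) ^ (1/q) := by
  obtain ⟨hs0, hs1⟩ := hs
  set m : ℝ := (a+b)/2 with hm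
  set c : ℝ := b - a with hcdef
  have hc : 0 < c := by rw [hcdef]; linarith
  have ham : a < m := by rw [hm]; linarith
  have hmb : m < b := by rw [hm]; linarith
  set α : ℝ := |f' a| ^ q with hal
  set β : ℝ := |f' b| ^ q with hbe
  have hα : 0 ≤ α := Real.rpow_nonneg (abs_nonneg _) _
  have hβ : 0 ≤ β := Real.rpow_nonneg (abs_nonneg _) _
  -- pointwise s-convexity bound
  have hbd : ∀ x ∈ Set.Icc a m, |f' x| ^ q ≤ ((b-x)/c)^s * α + ((x-a)/c)^s * β := by
    intro x hx
    have hx1 : a ≤ x := hx.1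
    have hx2 : x ≤ m := hx.2
    have ht0 : 0 ≤ (b-x)/c := by
      apply div_nonneg _ hc.le; rw [hm] at hx2; linarith
    have ht1 : (b-x)/c ≤ 1 := by
      rw [div_le_one hc, hcdef]; linarith
    have h1t : 1 - (b-x)/c = (x-a)/c := by
      rw [eq_div_iff hc.ne', sub_mul, div_mul_cancel₀ _ hc.ne', hcdef]; ring
    have h := hconv a ⟨le_rfl, hab.le⟩ b ⟨hab.le, le_rfl⟩ ((b-x)/c) ⟨ht0, ht1⟩
    rw [h1t] at h
    have hxx : (b-x)/c * a + (x-a)/c * b = x := by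
      rw [div_mul_eq_mul_div, div_mul_eq_mul_div, ← add_div, div_eq_iff hc.ne', hcdef]; ring
    rw [hxx] at h
    exact h
  -- integrability of |f'|^q on [a, m]
  have hint' : IntervalIntegrable f' volume a m := by
    apply hint.mono_set
    rw [Set.uIcc_of_le ham.le, Set.uIcc_of_le hab.le]
    exact Set.Icc_subset_Icc le_rfl hmb.le
  have hf'm : AEMeasurable f' (volume.restrict (Set.Ioc a m)) :=
    ((intervalIntegrable_iff_integrableOn_Ioc_of_le ham.le).mp hint').aemeasurable
  have hgm : AEMeasurable (fun x => |f' x| ^ q) (volume.restrict (Set.Ioc a m)) :=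
    ((continuous_abs.measurable.comp_aemeasurable hf'm).pow aemeasurable_const)
  have hgq_int : IntervalIntegrable (fun x => |f' x| ^ q) volume a m := by
    rw [intervalIntegrable_iff_integrableOn_Ioc_of_le ham.le]
    apply Integrable.mono' (integrable_const (α + β)) hgm.aestronglyMeasurable
    rw [ae_restrict_iff' measurableSet_Ioc]
    apply Filter.Eventually.of_forall
    intro x hx
    have hx' : x ∈ Set.Icc a m := Set.Ioc_subset_Icc_self hx
    rw [Real.norm_of_nonneg (Real.rpow_nonneg (abs_nonneg _) _)]
    refine (hbd x hx').trans ?_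
    have h1 : ((b-x)/c)^s ≤ 1 :=
      Real.rpow_le_one (by apply div_nonneg _ hc.le; rw [hm] at hx'; have := hx'.2; linarith)
        (by rw [div_le_one hc, hcdef]; have := hx'.1; linarith) hs0.le
    have h2 : ((x-a)/c)^s ≤ 1 :=
      Real.rpow_le_one (by apply div_nonneg _ hc.le; have := hx'.1; linarith)
        (by rw [div_le_one hc, hcdef]; rw [hm] at hx'; have := hx'.2; linarith) hs0.le
    nlinarith [mul_le_of_le_one_left hα h1, mul_le_of_le_one_left hβ h2]
  -- weight integrabilities
  have hw_int : IntervalIntegrable (fun x => x - a) volume a m :=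
    ((continuous_id.sub continuous_const).intervalIntegrable _ _)
  have hwgq_int : IntervalIntegrable (fun x => (x-a) * |f' x| ^ q) volume a m :=
    hgq_int.continuousOn_mul ((continuous_id.sub continuous_const).continuousOn)
  -- Hölder step
  have hold : ∫ x in a..m, (x-a) * |f' x|
      ≤ (∫ x in a..m, (x-a)) ^ (1-1/q) * (∫ x in a..m, (x-a) * |f' x|^q) ^ (1/q) := by
    have h0 := holder_weight (μ := volume.restrict (Set.Ioc a m)) (w := fun x => x - a)
      (g := fun x => |f' x|) hq
      (by rw [Filter.EventuallyLE, ae_restrict_iff' measurableSet_Ioc]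
          exact Filter.Eventually.of_forall fun x hx => by simp only [Pi.zero_apply]; linarith [hx.1])
      (Filter.Eventually.of_forall fun x => abs_nonneg _)
      (continuous_abs.measurable.comp_aemeasurable hf'm)
      ((intervalIntegrable_iff_integrableOn_Ioc_of_le ham.le).mp hw_int)
      ((intervalIntegrable_iff_integrableOn_Ioc_of_le ham.le).mp hwgq_int)
    rw [intervalIntegral.integral_of_le ham.le, intervalIntegral.integral_of_le ham.le,
      intervalIntegral.integral_of_le ham.le]
    exact h0
  -- weight integral value
  have hwval : ∫ x in a..m, (x - a) = c^2/8 := by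
    have h := intervalIntegral.integral_comp_sub_right (a := a) (b := m) (fun x => x) a
    rw [h, integral_id, hm, hcdef]
    ring
  -- continuity facts
  have hrpow_cont : Continuous fun y : ℝ => y ^ s := by
    rw [continuous_iff_continuousAt]
    intro y
    exact Real.continuousAt_rpow_const y s (Or.inr hs0.le)
  have c2 : Continuous fun x : ℝ => ((b-x)/c)^s :=
    hrpow_cont.comp ((continuous_const.sub continuous_id).div_const c)
  have c3 : Continuous fun x : ℝ => ((x-a)/c)^s :=
    hrpow_cont.comp ((continuous_id.sub continuous_const).div_const c)
  have hint_c2 : IntervalIntegrable (fun x => α * ((x-a) * ((b-x)/c)^s)) volume a m :=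
    ((continuous_const.mul ((continuous_id.sub continuous_const).mul c2)).intervalIntegrable _ _)
  have hint_c3 : IntervalIntegrable (fun x => β * ((x-a) * ((x-a)/c)^s)) volume a m :=
    ((continuous_const.mul ((continuous_id.sub continuous_const).mul c3)).intervalIntegrable _ _)
  -- monotone comparison
  have hmono : ∫ x in a..m, (x-a) * |f' x|^q
      ≤ ∫ x in a..m, (α * ((x-a) * ((b-x)/c)^s) + β * ((x-a) * ((x-a)/c)^s)) := by
    apply intervalIntegral.integral_mono_on ham.le hwgq_int (hint_c2.add hint_c3)
    intro x hx
    have h := mul_le_mul_of_nonneg_left (hbd x hx) (by linarith [hx.1] : 0 ≤ x - a)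
    calc (x-a) * |f' x|^q ≤ (x-a) * (((b-x)/c)^s * α + ((x-a)/c)^s * β) := h
      _ = α * ((x-a) * ((b-x)/c)^s) + β * ((x-a) * ((x-a)/c)^s) := by ring
  -- computations
  have hI1 : ∫ x in a..m, (x-a) * ((x-a)/c)^s = ((c/2)^(s+2)/(s+2)) / c^s := by
    have h := intervalIntegral.integral_comp_sub_right (a := a) (b := m)
      (fun y => y * (y/c)^s) a
    rw [h]
    have hma : m - a = c/2 := by rw [hm, hcdef]; ring
    have congr1 : Set.EqOn (fun y => y * (y/c)^s) (fun y => y^(s+1)/c^s)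
        (Set.uIcc (a-a) (m-a)) := by
      intro y hy
      rw [Set.uIcc_of_le (by linarith : a-a ≤ m - a)] at hy
      have hy0 : 0 ≤ y := by have := hy.1; linarith
      simp only
      rw [Real.div_rpow hy0 hc.le]
      rcases eq_or_lt_of_le hy0 with h'|h'
      · rw [← h', Real.zero_rpow (by positivity : s+1 ≠ 0), Real.zero_rpow hs0.ne']
        ring
      · rw [Real.rpow_add h', Real.rpow_one]; ring
    rw [intervalIntegral.integral_congr congr1]
    rw [intervalIntegral.integral_div, integral_rpow (Or.inl (by linarith)), hma]
    rw [show a - a = (0:ℝ) by ring, Real.zero_rpow (by positivity : s+1+1 ≠ 0)]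
    rw [show s+1+1 = s+2 by ring]
    ring
  have hI2 : ∫ x in a..m, (x-a) * ((b-x)/c)^s
      = (c*((c^(s+1)-(c/2)^(s+1))/(s+1)) - (c^(s+2)-(c/2)^(s+2))/(s+2)) / c^s := by
    have step : ∫ x in a..m, (x-a) * ((b-x)/c)^s
        = ∫ u in (b-m)..(b-a), (b-u-a)*(u/c)^s := by
      rw [← intervalIntegral.integral_comp_sub_left (fun u => (b-u-a)*(u/c)^s) b]
      apply intervalIntegral.integral_congr
      intro x _
      simp only
      rw [show b-(b-x)-a = x-a by ring]
    rw [step, show b - m = c/2 by rw [hm, hcdef]; ring, show b - a = c from hcdef.symm]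
    have congr2 : Set.EqOn (fun u => (b-u-a)*(u/c)^s) (fun u => (c*u^s - u^(s+1))/c^s)
        (Set.uIcc (c/2) c) := by
      intro u hu
      rw [Set.uIcc_of_le (by linarith : c/2 ≤ c)] at hu
      have hu0 : 0 < u := lt_of_lt_of_le (by linarith) hu.1
      simp only
      rw [Real.div_rpow hu0.le hc.le, Real.rpow_add hu0, Real.rpow_one,
        show b - u - a = c - u by rw [hcdef]; ring]
      ring
    rw [intervalIntegral.integral_congr congr2]
    have hint1 : IntervalIntegrable (fun u : ℝ => c * u^s) volume (c/2) c :=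
      ((continuous_const.mul hrpow_cont).intervalIntegrable _ _)
    have hint2 : IntervalIntegrable (fun u : ℝ => u^(s+1)) volume (c/2) c := by
      have hcont : Continuous fun y : ℝ => y ^ (s+1) := by
        rw [continuous_iff_continuousAt]
        intro y
        exact Real.continuousAt_rpow_const y (s+1) (Or.inr (by linarith : (0:ℝ) ≤ s+1))
      exact hcont.intervalIntegrable _ _
    rw [intervalIntegral.integral_div, intervalIntegral.integral_sub hint1 hint2,
      intervalIntegral.integral_const_mul, integral_rpow (Or.inl (by linarith)),
      integral_rpow (Or.inl (by linarith)), show s+1+1 = s+2 by ring]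
  -- sum value
  have hsum : ∫ x in a..m, (α * ((x-a) * ((b-x)/c)^s) + β * ((x-a) * ((x-a)/c)^s))
      = α * ((c*((c^(s+1)-(c/2)^(s+1))/(s+1)) - (c^(s+2)-(c/2)^(s+2))/(s+2)) / c^s)
        + β * (((c/2)^(s+2)/(s+2)) / c^s) := by
    rw [intervalIntegral.integral_add hint_c2 hint_c3,
      intervalIntegral.integral_const_mul, intervalIntegral.integral_const_mul, hI1, hI2]
  -- final algebra
  have halg : α * ((c*((c^(s+1)-(c/2)^(s+1))/(s+1)) - (c^(s+2)-(c/2)^(s+2))/(s+2)) / c^s)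
        + β * (((c/2)^(s+2)/(s+2)) / c^s)
      = (c^2/8) * (2/((s+1)*(s+2))) *
        ((2:ℝ)^(1-s)*(s+1)/2*β + (2:ℝ)^(1-s)*((2:ℝ)^(s+2)-s-3)/2*α) := by
    have hγ : (0:ℝ) < c^s := Real.rpow_pos_of_pos hc s
    have hτ : (0:ℝ) < (2:ℝ)^s := Real.rpow_pos_of_pos two_pos s
    have h2 : ∀ x : ℝ, 0 < x → x^(2:ℝ) = x^2 := fun x hx => by
      rw [show (2:ℝ) = ((2:ℕ):ℝ) from by norm_num, Real.rpow_natCast]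
    have e1 : (2:ℝ)^(1-s) = 2/(2:ℝ)^s := by
      rw [Real.rpow_sub two_pos, Real.rpow_one]
    have e2 : (2:ℝ)^(s+2) = (2:ℝ)^s * 4 := by
      rw [Real.rpow_add two_pos, h2 2 two_pos]; norm_num
    have e3 : c^(s+1) = c^s * c := by rw [Real.rpow_add hc, Real.rpow_one]
    have e4 : c^(s+2) = c^s * c^2 := by rw [Real.rpow_add hc, h2 c hc]
    have e5 : (c/2)^(s+1) = (c^s/(2:ℝ)^s) * (c/2) := by
      rw [Real.rpow_add (by positivity), Real.rpow_one, Real.div_rpow hc.le (by norm_num)]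
    have e6 : (c/2)^(s+2) = (c^s/(2:ℝ)^s) * (c/2)^2 := by
      rw [Real.rpow_add (by positivity), h2 (c/2) (by positivity),
        Real.div_rpow hc.le (by norm_num)]
    rw [e1, e2, e3, e4, e5, e6]
    have h1 : s + 1 ≠ 0 := by linarith
    have h2' : s + 2 ≠ 0 := by linarith
    field_simp
    ring
  -- combine
  have hJ0 : 0 ≤ ∫ x in a..m, (x-a) * |f' x|^q :=
    intervalIntegral.integral_nonneg ham.le
      (fun x hx => mul_nonneg (by linarith [hx.1]) (Real.rpow_nonneg (abs_nonneg _) _))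
  have hfinal : (∫ x in a..m, (x-a) * |f' x|^q)
      ≤ (c^2/8) * (2/((s+1)*(s+2))) *
        ((2:ℝ)^(1-s)*(s+1)/2*β + (2:ℝ)^(1-s)*((2:ℝ)^(s+2)-s-3)/2*α) := by
    rw [← halg, ← hsum]
    exact hmono
  calc ∫ x in a..m, (x-a) * |f' x|
      ≤ (∫ x in a..m, (x-a)) ^ (1-1/q) * (∫ x in a..m, (x-a) * |f' x|^q) ^ (1/q) := hold
    _ = (c^2/8) ^ (1-1/q) * (∫ x in a..m, (x-a) * |f' x|^q) ^ (1/q) := by rw [hwval]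
    _ ≤ (c^2/8) ^ (1-1/q) *
        ((c^2/8) * (2/((s+1)*(s+2))) *
          ((2:ℝ)^(1-s)*(s+1)/2*β + (2:ℝ)^(1-s)*((2:ℝ)^(s+2)-s-3)/2*α)) ^ (1/q) := by
      apply mul_le_mul_of_nonneg_left _ (Real.rpow_nonneg (by positivity) _)
      exact Real.rpow_le_rpow hJ0 hfinal (by positivity)

theorem stmt_5 (I : Set ℝ) (f f' : ℝ → ℝ) (a b s q : ℝ)
    (hab : a < b) (hI0 : I ⊆ Set.Ici (0:ℝ)) (hI : Set.Icc a b ⊆ interior I)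
    (hs : s ∈ Set.Ioc (0:ℝ) 1) (hq : 1 ≤ q)
    (hder : ∀ x ∈ interior I, HasDerivAt f (f' x) x)
    (hint : IntervalIntegrable f' volume a b)
    (hconv : ∀ x ∈ Set.Icc a b, ∀ y ∈ Set.Icc a b, ∀ t ∈ Set.Icc (0:ℝ) 1,
      |f' (t * x + (1 - t) * y)| ^ q ≤ t ^ s * |f' x| ^ q + (1 - t) ^ s * |f' y| ^ q) :
    |f ((a + b)/2) - (1 / (b - a)) * ∫ x in a..b, f x|
      ≤ ((b - a)/8) * (2 / ((s+1) * (s+2))) ^ (1/q) *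
        (((2:ℝ)^(1-s) * (s+1) / 2 * |f' b| ^ q
            + (2:ℝ)^(1-s) * ((2:ℝ)^(s+2) - s - 3) / 2 * |f' a| ^ q) ^ (1/q)
          + ((2:ℝ)^(1-s) * (s+1) / 2 * |f' a| ^ q
            + (2:ℝ)^(1-s) * ((2:ℝ)^(s+2) - s - 3) / 2 * |f' b| ^ q) ^ (1/q)) := by
  have hq0 : 0 < q := lt_of_lt_of_le one_pos hq
  set m : ℝ := (a+b)/2 with hm
  set c : ℝ := b - a with hcdef
  have hc : 0 < c := by rw [hcdef]; linarith
  have ham : a < m := by rw [hm]; linarith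
  have hmb : m < b := by rw [hm]; linarith
  -- basic integrability / continuity
  have hderiv : ∀ x ∈ Set.Icc a b, HasDerivAt f (f' x) x := fun x hx => hder x (hI hx)
  have hfc : ContinuousOn f (Set.Icc a b) := fun x hx =>
    ((hderiv x hx).continuousAt).continuousWithinAt
  have hfint1 : IntervalIntegrable f volume a m := by
    apply ContinuousOn.intervalIntegrable
    apply hfc.mono
    rw [Set.uIcc_of_le ham.le]
    exact Set.Icc_subset_Icc le_rfl hmb.le
  have hfint2 : IntervalIntegrable f volume m b := by
    apply ContinuousOn.intervalIntegrable
    apply hfc.mono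
    rw [Set.uIcc_of_le hmb.le]
    exact Set.Icc_subset_Icc ham.le le_rfl
  have hint1 : IntervalIntegrable f' volume a m := by
    apply hint.mono_set
    rw [Set.uIcc_of_le ham.le, Set.uIcc_of_le hab.le]
    exact Set.Icc_subset_Icc le_rfl hmb.le
  have hint2 : IntervalIntegrable f' volume m b := by
    apply hint.mono_set
    rw [Set.uIcc_of_le hmb.le, Set.uIcc_of_le hab.le]
    exact Set.Icc_subset_Icc ham.le le_rfl
  -- integration by parts on [a, m]
  have hIBP1 : ∫ x in a..m, (x - a) * f' x = (m - a) * f m - ∫ x in a..m, f x := by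
    have h := intervalIntegral.integral_mul_deriv_eq_deriv_mul
      (u := fun x => x - a) (u' := fun _ => (1:ℝ)) (v := f) (v' := f')
      (fun x _ => (hasDerivAt_id x).sub_const a)
      (fun x hx => by
        apply hderiv
        rw [Set.uIcc_of_le ham.le] at hx
        exact Set.Icc_subset_Icc le_rfl hmb.le hx)
      (intervalIntegrable_const) hint1
    simp only [sub_self, zero_mul, sub_zero, one_mul] at h
    rw [h]
  have hIBP2 : ∫ x in m..b, (x - b) * f' x = (b - m) * f m - ∫ x in m..b, f x := by
    have h := intervalIntegral.integral_mul_deriv_eq_deriv_mul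
      (u := fun x => x - b) (u' := fun _ => (1:ℝ)) (v := f) (v' := f')
      (a := m) (b := b)
      (fun x _ => (hasDerivAt_id x).sub_const b)
      (fun x hx => by
        apply hderiv
        rw [Set.uIcc_of_le hmb.le] at hx
        exact Set.Icc_subset_Icc ham.le le_rfl hx)
      (intervalIntegrable_const) hint2
    simp only [sub_self, zero_mul, one_mul] at h
    rw [h]
    ring
  have hsplit : (∫ x in a..b, f x) = (∫ x in a..m, f x) + ∫ x in m..b, f x :=
    (intervalIntegral.integral_add_adjacent_intervals hfint1 hfint2).symm
  -- the midpoint identity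
  have hid : c * f m - ∫ x in a..b, f x
      = (∫ x in a..m, (x - a) * f' x) + ∫ x in m..b, (x - b) * f' x := by
    rw [hIBP1, hIBP2, hsplit]
    have h1 : m - a = c/2 := by rw [hm, hcdef]; ring
    have h2 : b - m = c/2 := by rw [hm, hcdef]; ring
    rw [h1, h2]; ring
  -- bound each piece by integral of absolute values
  have habs1 : |∫ x in a..m, (x - a) * f' x| ≤ ∫ x in a..m, (x - a) * |f' x| := by
    refine (intervalIntegral.abs_integral_le_integral_abs ham.le).trans_eq ?_
    apply intervalIntegral.integral_congr
    intro x hx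
    rw [Set.uIcc_of_le ham.le] at hx
    simp only
    rw [abs_mul, abs_of_nonneg (by linarith [hx.1] : (0:ℝ) ≤ x - a)]
  have habs2 : |∫ x in m..b, (x - b) * f' x| ≤ ∫ x in m..b, (b - x) * |f' x| := by
    have he : (∫ x in m..b, (x - b) * f' x) = - ∫ x in m..b, (b - x) * f' x := by
      rw [← intervalIntegral.integral_neg]
      apply intervalIntegral.integral_congr
      intro x _
      simp only
      ring
    rw [he, abs_neg]
    refine (intervalIntegral.abs_integral_le_integral_abs hmb.le).trans_eq ?_
    apply intervalIntegral.integral_congr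
    intro x hx
    rw [Set.uIcc_of_le hmb.le] at hx
    simp only
    rw [abs_mul, abs_of_nonneg (by linarith [hx.2] : (0:ℝ) ≤ b - x)]
  -- key applied to f'
  have key1 := key f' a b s q hab hs hq hint hconv
  rw [← hm, ← hcdef] at key1
  -- reflection
  set φ : ℝ → ℝ := fun x => f' (a + b - x) with hφ
  have hint_φ : IntervalIntegrable φ volume a b := by
    have h := hint.comp_sub_left (a + b)
    rw [show a + b - a = b by ring, show a + b - b = a by ring] at h
    exact h.symm
  have hconv_φ : ∀ x ∈ Set.Icc a b, ∀ y ∈ Set.Icc a b, ∀ t ∈ Set.Icc (0:ℝ) 1,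
      |φ (t * x + (1 - t) * y)| ^ q ≤ t ^ s * |φ x| ^ q + (1 - t) ^ s * |φ y| ^ q := by
    intro x hx y hy t ht
    have hx' : a + b - x ∈ Set.Icc a b := ⟨by linarith [hx.2], by linarith [hx.1]⟩
    have hy' : a + b - y ∈ Set.Icc a b := ⟨by linarith [hy.2], by linarith [hy.1]⟩
    have h := hconv (a+b-x) hx' (a+b-y) hy' t ht
    rw [show t*(a+b-x) + (1-t)*(a+b-y) = a + b - (t*x + (1-t)*y) by ring] at h
    simp only [hφ]
    exact h
  have key2 := key φ a b s q hab hs hq hint_φ hconv_φ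
  rw [← hm, ← hcdef] at key2
  rw [show |φ b| = |f' a| by simp only [hφ]; rw [show a + b - b = a by ring],
    show |φ a| = |f' b| by simp only [hφ]; rw [show a + b - a = b by ring]] at key2
  have hrefl : (∫ x in a..m, (x - a) * |φ x|) = ∫ x in m..b, (b - x) * |f' x| := by
    have h := intervalIntegral.integral_comp_sub_left
      (a := a) (b := m) (fun u => (b - u) * |f' u|) (a + b)
    rw [show a + b - m = m by rw [hm]; ring, show a + b - a = b by ring] at h
    rw [← h]
    apply intervalIntegral.integral_congr
    intro x _
    simp only [hφ]
    rw [show b - (a + b - x) = x - a by ring]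
  rw [hrefl] at key2
  -- assemble
  set D : ℝ := (s+1) * (s+2) with hD
  set A : ℝ := (2:ℝ)^(1-s) * (s+1) / 2 * |f' b| ^ q
      + (2:ℝ)^(1-s) * ((2:ℝ)^(s+2) - s - 3) / 2 * |f' a| ^ q with hA
  set B : ℝ := (2:ℝ)^(1-s) * (s+1) / 2 * |f' a| ^ q
      + (2:ℝ)^(1-s) * ((2:ℝ)^(s+2) - s - 3) / 2 * |f' b| ^ q with hB
  have hDpos : 0 < 2 / D := by
    rw [hD]
    have : 0 < s + 1 := by linarith [hs.1]
    have : 0 < s + 2 := by linarith [hs.1]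
    positivity
  have hcoeff : 0 ≤ (2:ℝ)^(s+2) - s - 3 := by
    have h4 : (4:ℝ) ≤ (2:ℝ)^(s+2) := by
      calc (4:ℝ) = (2:ℝ)^(2:ℝ) := by
            rw [show (2:ℝ) = ((2:ℕ):ℝ) from by norm_num, Real.rpow_natCast]; norm_num
        _ ≤ (2:ℝ)^(s+2) := Real.rpow_le_rpow_of_exponent_le one_le_two (by linarith [hs.1])
    linarith [hs.2]
  have hAnn : 0 ≤ A := by
    rw [hA]
    have h1 : (0:ℝ) ≤ (2:ℝ)^(1-s) := (Real.rpow_pos_of_pos two_pos _).le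
    have h2 : (0:ℝ) ≤ |f' a| ^ q := Real.rpow_nonneg (abs_nonneg _) _
    have h3 : (0:ℝ) ≤ |f' b| ^ q := Real.rpow_nonneg (abs_nonneg _) _
    have h4 : (0:ℝ) ≤ s + 1 := by linarith [hs.1]
    positivity
  have hBnn : 0 ≤ B := by
    rw [hB]
    have h1 : (0:ℝ) ≤ (2:ℝ)^(1-s) := (Real.rpow_pos_of_pos two_pos _).le
    have h2 : (0:ℝ) ≤ |f' a| ^ q := Real.rpow_nonneg (abs_nonneg _) _
    have h3 : (0:ℝ) ≤ |f' b| ^ q := Real.rpow_nonneg (abs_nonneg _) _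
    have h4 : (0:ℝ) ≤ s + 1 := by linarith [hs.1]
    positivity
  have hc8 : (0:ℝ) < c^2/8 := by positivity
  have hterm : ∀ X : ℝ, 0 ≤ X →
      (c^2/8)^(1-1/q) * ((c^2/8) * (2/D) * X)^(1/q)
        = (c^2/8) * ((2/D)^(1/q) * X^(1/q)) := by
    intro X hX
    rw [Real.mul_rpow (mul_nonneg hc8.le hDpos.le) hX,
      Real.mul_rpow hc8.le hDpos.le, ← mul_assoc, ← mul_assoc,
      ← Real.rpow_add hc8, show 1 - 1/q + 1/q = 1 by ring, Real.rpow_one]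
    ring
  -- final chain
  have he : (1/c) * (c * f m - ∫ x in a..b, f x)
      = f m - (1/c) * ∫ x in a..b, f x := by
    rw [mul_sub, ← mul_assoc, one_div, inv_mul_cancel₀ hc.ne', one_mul]
  have hLHS : |f m - (1/c) * ∫ x in a..b, f x|
      = (1/c) * |c * f m - ∫ x in a..b, f x| := by
    rw [← he, abs_mul, abs_of_pos (by positivity : (0:ℝ) < 1/c)]
  rw [hLHS, hid]
  have hsum : |(∫ x in a..m, (x - a) * f' x) + ∫ x in m..b, (x - b) * f' x|
      ≤ (c^2/8)^(1-1/q) * ((c^2/8) * (2/D) * A)^(1/q)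
        + (c^2/8)^(1-1/q) * ((c^2/8) * (2/D) * B)^(1/q) := by
    calc |(∫ x in a..m, (x - a) * f' x) + ∫ x in m..b, (x - b) * f' x|
        ≤ |∫ x in a..m, (x - a) * f' x| + |∫ x in m..b, (x - b) * f' x| := abs_add_le _ _
      _ ≤ (∫ x in a..m, (x - a) * |f' x|) + ∫ x in m..b, (b - x) * |f' x| :=
          add_le_add habs1 habs2
      _ ≤ (c^2/8)^(1-1/q) * ((c^2/8) * (2/D) * A)^(1/q)
          + (c^2/8)^(1-1/q) * ((c^2/8) * (2/D) * B)^(1/q) := by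
          apply add_le_add
          · exact key1
          · exact key2
  calc (1/c) * |(∫ x in a..m, (x - a) * f' x) + ∫ x in m..b, (x - b) * f' x|
      ≤ (1/c) * ((c^2/8)^(1-1/q) * ((c^2/8) * (2/D) * A)^(1/q)
          + (c^2/8)^(1-1/q) * ((c^2/8) * (2/D) * B)^(1/q)) :=
        mul_le_mul_of_nonneg_left hsum (by positivity)
    _ = (c/8) * (2/D)^(1/q) * (A^(1/q) + B^(1/q)) := by
        rw [hterm A hAnn, hterm B hBnn]
        field_simp
end

section
/- If |f'|^q is h-convex on [a,b] and α ∈ [0,1], then ∫₀^{1-α} |f'(tb+(1-t)a)|^q dt ≤ (1-α)[|f'((1-α)b+αa)|^q + |f'(a)|^q] ∫₀¹ h(t) dt. -/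
open MeasureTheory

theorem stmt_8 (h f' : ℝ → ℝ) (a b α q : ℝ)
    (hab : a < b) (hα : α ∈ Set.Icc (0:ℝ) 1)
    (hh0 : ∀ t ∈ Set.Ioo (0:ℝ) 1, 0 ≤ h t)
    (hhint : IntervalIntegrable h volume 0 1)
    (hg0 : ∀ x ∈ Set.Icc a b, 0 ≤ |f' x| ^ q)
    (hgint : IntervalIntegrable (fun x => |f' x| ^ q) volume a b)
    (hconv : ∀ x ∈ Set.Icc a b, ∀ y ∈ Set.Icc a b, ∀ t ∈ Set.Ioo (0:ℝ) 1,
      |f' (t * x + (1 - t) * y)| ^ q ≤ h t * |f' x| ^ q + h (1 - t) * |f' y| ^ q) :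
    (∫ t in (0:ℝ)..(1 - α), |f' (t * b + (1 - t) * a)| ^ q)
      ≤ (1 - α) * (|f' ((1 - α) * b + α * a)| ^ q + |f' a| ^ q) * ∫ t in (0:ℝ)..1, h t := by
  obtain ⟨hα0, hα1⟩ := hα
  set c := 1 - α with hc
  have hc0 : 0 ≤ c := by simp [hc]; linarith
  have hc1 : c ≤ 1 := by simp [hc]; linarith
  rcases eq_or_lt_of_le hc0 with hceq | hcpos
  · simp [← hceq]
  -- membership
  have hxmem : c * b + α * a ∈ Set.Icc a b := by
    rw [hc]
    constructor <;> nlinarith [mul_nonneg (by linarith : (0:ℝ) ≤ 1 - α) (sub_nonneg.2 hab.le),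
      mul_nonneg hα0 (sub_nonneg.2 hab.le)]
  have hamem : a ∈ Set.Icc a b := ⟨le_refl a, hab.le⟩
  set A := |f' (c * b + α * a)| ^ q with hA
  set B := |f' a| ^ q with hB
  -- substitution
  have hsub : (∫ t in (0:ℝ)..c, |f' (t * b + (1 - t) * a)| ^ q)
      = c * ∫ u in (0:ℝ)..1, |f' ((c * u) * b + (1 - c * u) * a)| ^ q := by
    have := intervalIntegral.smul_integral_comp_mul_left
      (fun t => |f' (t * b + (1 - t) * a)| ^ q) (a := 0) (b := 1) c
    simp only [mul_zero, mul_one, smul_eq_mul] at this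
    rw [← this]
  rw [hsub]
  -- integrability of the substituted integrand
  have hintG : IntervalIntegrable (fun u => |f' ((c * u) * b + (1 - c * u) * a)| ^ q)
      volume 0 1 := by
    have h1 : IntervalIntegrable (fun x => |f' ((b - a) * c * x + a)| ^ q) volume
        ((a - a) / ((b - a) * c)) ((b - a) / ((b - a) * c)) := by
      have := (hgint.comp_add_right a).comp_mul_left (c := (b - a) * c)
      simpa using this
    have hk : (0:ℝ) < (b - a) * c := by nlinarith
    have heq : ∀ u : ℝ, (b - a) * c * u + a = (c * u) * b + (1 - c * u) * a := by
      intro u; ring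
    simp only [heq] at h1
    have h2 : IntervalIntegrable (fun u => |f' ((c * u) * b + (1 - c * u) * a)| ^ q)
        volume 0 ((b - a) / ((b - a) * c)) := by
      simpa using h1
    apply h2.mono_set
    have hle : (1:ℝ) ≤ (b - a) / ((b - a) * c) := by
      rw [le_div_iff₀ hk]; nlinarith
    rw [Set.uIcc_of_le (by norm_num), Set.uIcc_of_le (by linarith)]
    exact Set.Icc_subset_Icc le_rfl hle
  -- integrability of the RHS integrand
  have hintR : IntervalIntegrable (fun u => h u * A + h (1 - u) * B) volume 0 1 := by
    have h1 : IntervalIntegrable (fun u => h (1 - u)) volume 0 1 := by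
      simpa using (hhint.comp_sub_left 1).symm
    exact (hhint.mul_const A).add (h1.mul_const B)
  -- a.e. comparison
  have hmono : (∫ u in (0:ℝ)..1, |f' ((c * u) * b + (1 - c * u) * a)| ^ q)
      ≤ ∫ u in (0:ℝ)..1, (h u * A + h (1 - u) * B) := by
    apply intervalIntegral.integral_mono_ae_restrict (by norm_num) hintG hintR
    have hio : volume.restrict (Set.Icc (0:ℝ) 1) = volume.restrict (Set.Ioo (0:ℝ) 1) :=
      (Measure.restrict_congr_set Ioo_ae_eq_Icc).symm
    rw [Filter.EventuallyLE, hio, ae_restrict_iff' measurableSet_Ioo]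
    apply Filter.Eventually.of_forall
    intro u hu
    have := hconv (c * b + α * a) hxmem a hamem u hu
    have e : u * (c * b + α * a) + (1 - u) * a = (c * u) * b + (1 - c * u) * a := by ring
    rwa [e] at this
  -- compute RHS integral
  have hRHS : (∫ u in (0:ℝ)..1, (h u * A + h (1 - u) * B))
      = (A + B) * ∫ t in (0:ℝ)..1, h t := by
    have h1 : IntervalIntegrable (fun u => h (1 - u)) volume 0 1 := by
      simpa using (hhint.comp_sub_left 1).symm
    rw [intervalIntegral.integral_add (hhint.mul_const A) (h1.mul_const B),
      intervalIntegral.integral_mul_const, intervalIntegral.integral_mul_const]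
    have h2 : (∫ u in (0:ℝ)..1, h (1 - u)) = ∫ t in (0:ℝ)..1, h t := by
      have := intervalIntegral.integral_comp_sub_left (a := 0) (b := 1) h 1
      simpa using this
    rw [h2]; ring
  calc c * ∫ u in (0:ℝ)..1, |f' ((c * u) * b + (1 - c * u) * a)| ^ q
      ≤ c * ∫ u in (0:ℝ)..1, (h u * A + h (1 - u) * B) :=
        mul_le_mul_of_nonneg_left hmono hc0
    _ = c * ((A + B) * ∫ t in (0:ℝ)..1, h t) := by rw [hRHS]
    _ = c * (A + B) * ∫ t in (0:ℝ)..1, h t := by ring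
end

section
/- Let f be differentiable on I° with f' integrable on [a,b], a < b, q > 1 with 1/p+1/q = 1, and |f'|^q s-convex in the second sense on [a,b] for s ∈ (0,1]. Then |(f(a)+f(b))/2 - (1/(b-a))∫ₐᵇ f(x)dx| ≤ ((b-a)/4)(1/(p+1))^{1/p} · { ((|f'((a+b)/2)|^q + |f'(a)|^q)/(s+1))^{1/q} + ((|f'((a+b)/2)|^q + |f'(b)|^q)/(s+1))^{1/q} }. -/
open MeasureTheory

lemma holder_seg (g : ℝ → ℝ) (c d s p q A B : ℝ)
    (hcd : c < d) (hs : 0 < s) (hq : 1 < q) (hp : 1 < p) (hpq : 1/p + 1/q = 1)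
    (hA : 0 ≤ A) (hB : 0 ≤ B)
    (hm : AEStronglyMeasurable g (volume.restrict (Set.Ioc c d)))
    (hbound : ∀ x ∈ Set.Icc c d,
      |g x| ^ q ≤ ((x - c)/(d - c)) ^ s * A + ((d - x)/(d - c)) ^ s * B) :
    ∫ x in c..d, (x - c) * |g x|
      ≤ (d - c)^2 * (1/(p+1)) ^ (1/p) * ((A + B)/(s+1)) ^ (1/q) := by
  have hdc : (0:ℝ) < d - c := by linarith
  have hs1 : (0:ℝ) < s + 1 := by linarith
  have hq0 : (0:ℝ) < q := by linarith
  have hp0 : (0:ℝ) < p := by linarith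
  have hqne : q ≠ 0 := ne_of_gt hq0
  have hconj : Real.HolderConjugate p q := ⟨by rw [inv_one, ← one_div, ← one_div]; exact hpq, hp0, hq0⟩
  haveI : IsFiniteMeasure (volume.restrict (Set.Ioc c d)) :=
    ⟨by rw [Measure.restrict_apply_univ]; exact measure_Ioc_lt_top⟩
  -- pointwise bound for |g|
  have hfrac1 : ∀ x ∈ Set.Icc c d, ((x - c)/(d - c)) ^ s ≤ 1 := by
    intro x hx
    apply Real.rpow_le_one (div_nonneg (by linarith [hx.1]) hdc.le) _ hs.le
    rw [div_le_one hdc]; linarith [hx.2]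
  have hfrac2 : ∀ x ∈ Set.Icc c d, ((d - x)/(d - c)) ^ s ≤ 1 := by
    intro x hx
    apply Real.rpow_le_one (div_nonneg (by linarith [hx.2]) hdc.le) _ hs.le
    rw [div_le_one hdc]; linarith [hx.1]
  have hq_bound : ∀ x ∈ Set.Icc c d, |g x| ^ q ≤ A + B := by
    intro x hx
    calc |g x| ^ q ≤ ((x - c)/(d - c)) ^ s * A + ((d - x)/(d - c)) ^ s * B := hbound x hx
      _ ≤ 1 * A + 1 * B := by
          gcongr
          exacts [hfrac1 x hx, hfrac2 x hx]
      _ = A + B := by ring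
  have habs_bound : ∀ x ∈ Set.Icc c d, |g x| ≤ (A + B) ^ (1/q) := by
    intro x hx
    have : |g x| = (|g x| ^ q) ^ (1/q) := by
      rw [← Real.rpow_mul (abs_nonneg _), mul_one_div, div_self hqne, Real.rpow_one]
    rw [this]
    exact Real.rpow_le_rpow (Real.rpow_nonneg (abs_nonneg _) _) (hq_bound x hx) (by positivity)
  -- Hölder
  have hmem1 : MemLp (fun x => x - c) (ENNReal.ofReal p) (volume.restrict (Set.Ioc c d)) := by
    refine MemLp.mono_exponent (q := ⊤) ?_ le_top
    refine memLp_top_of_bound ((continuous_id.sub continuous_const).aestronglyMeasurable) (d - c) ?_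
    refine (ae_restrict_iff' measurableSet_Ioc).mpr (ae_of_all _ fun x hx => ?_)
    rw [Real.norm_eq_abs, abs_of_nonneg (by linarith [hx.1])]
    linarith [hx.2]
  have hmem2 : MemLp (fun x => |g x|) (ENNReal.ofReal q) (volume.restrict (Set.Ioc c d)) := by
    refine MemLp.mono_exponent (q := ⊤) ?_ le_top
    refine memLp_top_of_bound hm.norm ((A + B) ^ (1/q)) ?_
    refine (ae_restrict_iff' measurableSet_Ioc).mpr (ae_of_all _ fun x hx => ?_)
    rw [Real.norm_eq_abs, abs_abs]
    exact habs_bound x (Set.Ioc_subset_Icc_self hx)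
  have holder := integral_mul_le_Lp_mul_Lq_of_nonneg (μ := volume.restrict (Set.Ioc c d)) hconj
    ((ae_restrict_iff' measurableSet_Ioc).mpr (ae_of_all _ fun x hx => by simpa using (by linarith [hx.1] : (0:ℝ) ≤ x - c)))
    (ae_of_all _ fun x => abs_nonneg (g x)) hmem1 hmem2
  -- value of the weight integral
  have hw : ∫ x in Set.Ioc c d, (x - c) ^ p = (d - c) ^ (p+1) / (p+1) := by
    rw [← intervalIntegral.integral_of_le hcd.le,
      intervalIntegral.integral_comp_sub_right (fun u => u ^ p) c, sub_self,
      integral_rpow (Or.inl (by linarith : (-1:ℝ) < p)),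
      Real.zero_rpow (by positivity)]
    ring
  -- continuity of the comparison functions
  have hc1 : Continuous (fun x : ℝ => ((x - c)/(d - c)) ^ s) := by
    refine continuous_iff_continuousAt.mpr fun x => ?_
    exact (Real.continuousAt_rpow_const _ _ (Or.inr hs.le)).comp (by fun_prop)
  have hc2 : Continuous (fun x : ℝ => ((d - x)/(d - c)) ^ s) := by
    refine continuous_iff_continuousAt.mpr fun x => ?_
    exact (Real.continuousAt_rpow_const _ _ (Or.inr hs.le)).comp (by fun_prop)
  -- integrability of |g|^q
  have hms : AEStronglyMeasurable (fun x => |g x| ^ q) (volume.restrict (Set.Ioc c d)) := by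
    have : AEMeasurable (fun x => |g x|) (volume.restrict (Set.Ioc c d)) := by
      simpa [Real.norm_eq_abs] using hm.norm.aemeasurable
    have hcq : Continuous (fun y : ℝ => y ^ q) :=
      continuous_iff_continuousAt.mpr fun y =>
        Real.continuousAt_rpow_const _ _ (Or.inr (by linarith))
    exact (hcq.measurable.comp_aemeasurable this).aestronglyMeasurable
  have hint_g : IntervalIntegrable (fun x => |g x| ^ q) volume c d := by
    rw [intervalIntegrable_iff_integrableOn_Ioc_of_le hcd.le]
    refine memLp_one_iff_integrable.mp (MemLp.mono_exponent (q := ⊤) ?_ le_top)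
    refine memLp_top_of_bound hms (A + B) ?_
    refine (ae_restrict_iff' measurableSet_Ioc).mpr (ae_of_all _ fun x hx => ?_)
    rw [Real.norm_eq_abs, abs_of_nonneg (Real.rpow_nonneg (abs_nonneg _) _)]
    exact hq_bound x (Set.Ioc_subset_Icc_self hx)
  have hint_bd : IntervalIntegrable
      (fun x => ((x - c)/(d - c)) ^ s * A + ((d - x)/(d - c)) ^ s * B) volume c d :=
    ((hc1.mul continuous_const).add (hc2.mul continuous_const)).intervalIntegrable c d
  have hmono : ∫ x in c..d, |g x| ^ q
      ≤ ∫ x in c..d, (((x - c)/(d - c)) ^ s * A + ((d - x)/(d - c)) ^ s * B) := by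
    refine intervalIntegral.integral_mono_on hcd.le hint_g hint_bd hbound
  have hdcs : (0:ℝ) < (d - c) ^ s := Real.rpow_pos_of_pos hdc s
  have hI1 : ∫ x in c..d, ((x - c)/(d - c)) ^ s = (d - c) / (s+1) := by
    have hco : ∀ x ∈ Set.uIcc c d, ((x - c)/(d - c)) ^ s = (x - c) ^ s / (d - c) ^ s := by
      intro x hx
      rw [Set.uIcc_of_le hcd.le] at hx
      exact Real.div_rpow (by linarith [hx.1] : (0:ℝ) ≤ x - c) hdc.le s
    rw [intervalIntegral.integral_congr hco]
    simp_rw [div_eq_mul_inv]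
    rw [intervalIntegral.integral_mul_const,
      intervalIntegral.integral_comp_sub_right (fun u => u ^ s) c, sub_self,
      integral_rpow (Or.inl (by linarith : (-1:ℝ) < s)),
      Real.zero_rpow (by positivity), Real.rpow_add hdc, Real.rpow_one]
    field_simp
    ring
  have hI2 : ∫ x in c..d, ((d - x)/(d - c)) ^ s = (d - c) / (s+1) := by
    have := intervalIntegral.integral_comp_sub_left (a := c) (b := d)
      (fun u => (u/(d - c)) ^ s) d
    rw [sub_self] at this
    rw [this]
    have hco : ∀ x ∈ Set.uIcc 0 (d - c), (x/(d - c)) ^ s = x ^ s / (d - c) ^ s := by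
      intro x hx
      rw [Set.uIcc_of_le hdc.le] at hx
      exact Real.div_rpow hx.1 hdc.le s
    rw [intervalIntegral.integral_congr hco]
    simp_rw [div_eq_mul_inv]
    rw [intervalIntegral.integral_mul_const,
      integral_rpow (Or.inl (by linarith : (-1:ℝ) < s)),
      Real.zero_rpow (by positivity), Real.rpow_add hdc, Real.rpow_one]
    field_simp
    ring
  have hgq : ∫ x in Set.Ioc c d, |g x| ^ q ≤ (d - c) * (A + B) / (s+1) := by
    rw [← intervalIntegral.integral_of_le hcd.le]
    refine hmono.trans_eq ?_
    rw [intervalIntegral.integral_add (f := fun x => ((x - c)/(d - c)) ^ s * A)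
      (g := fun x => ((d - x)/(d - c)) ^ s * B) ((hc1.mul continuous_const).intervalIntegrable c d)
      ((hc2.mul continuous_const).intervalIntegrable c d),
      intervalIntegral.integral_mul_const, intervalIntegral.integral_mul_const, hI1, hI2]
    ring
  have key : ∫ x in Set.Ioc c d, (x - c) * |g x|
      ≤ ((d - c) ^ (p+1) / (p+1)) ^ (1/p) * ((d - c) * (A + B) / (s+1)) ^ (1/q) := by
    refine holder.trans ?_
    rw [hw]
    refine mul_le_mul_of_nonneg_left ?_ (Real.rpow_nonneg (by positivity) _)
    refine Real.rpow_le_rpow ?_ hgq (by positivity)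
    exact setIntegral_nonneg measurableSet_Ioc fun x _ => Real.rpow_nonneg (abs_nonneg _) _
  have hexp : (p+1) * (1/p) + 1/q = 2 := by
    have h1 : (p+1) * (1/p) = 1 + 1/p := by field_simp
    rw [h1]; linarith
  have halg : ((d - c) ^ (p+1) / (p+1)) ^ (1/p) * ((d - c) * (A + B) / (s+1)) ^ (1/q)
      = (d - c)^2 * (1/(p+1)) ^ (1/p) * ((A + B)/(s+1)) ^ (1/q) := by
    rw [div_eq_mul_one_div ((d - c) ^ (p+1)) (p+1),
      Real.mul_rpow (Real.rpow_nonneg hdc.le _) (by positivity),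
      show (d - c) * (A + B) / (s+1) = (d - c) * ((A + B) / (s+1)) by ring,
      Real.mul_rpow hdc.le (by positivity),
      ← Real.rpow_mul hdc.le]
    have h2 : (d - c) ^ ((p+1) * (1/p)) * (d - c) ^ (1/q) = (d - c)^2 := by
      rw [← Real.rpow_add hdc, hexp,
        show (2:ℝ) = ((2:ℕ):ℝ) by norm_num, Real.rpow_natCast]
    rw [← h2]
    ring
  rw [intervalIntegral.integral_of_le hcd.le]
  exact key.trans_eq halg

theorem stmt_9 (I : Set ℝ) (f f' : ℝ → ℝ) (a b s p q : ℝ)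
    (hab : a < b) (hI0 : I ⊆ Set.Ici (0:ℝ)) (hI : Set.Icc a b ⊆ interior I)
    (hs : s ∈ Set.Ioc (0:ℝ) 1) (hq : 1 < q) (hpq : 1/p + 1/q = 1)
    (hder : ∀ x ∈ interior I, HasDerivAt f (f' x) x)
    (hint : IntervalIntegrable f' volume a b)
    (hconv : ∀ x ∈ Set.Icc a b, ∀ y ∈ Set.Icc a b, ∀ t ∈ Set.Icc (0:ℝ) 1,
      |f' (t * x + (1 - t) * y)| ^ q ≤ t ^ s * |f' x| ^ q + (1 - t) ^ s * |f' y| ^ q) :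
    |(f a + f b)/2 - (1 / (b - a)) * ∫ x in a..b, f x|
      ≤ ((b - a)/4) * (1/(p+1)) ^ (1/p) *
        (((|f' ((a + b)/2)| ^ q + |f' a| ^ q) / (s+1)) ^ (1/q)
          + ((|f' ((a + b)/2)| ^ q + |f' b| ^ q) / (s+1)) ^ (1/q)) := by
  obtain ⟨hs0, hs1⟩ := hs
  set m : ℝ := (a + b)/2 with hm_def
  have ham : a < m := by rw [hm_def]; linarith
  have hmb : m < b := by rw [hm_def]; linarith
  have hq0 : (0:ℝ) < q := by linarith
  have hqinv : (0:ℝ) < 1/q := by positivity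
  have hqlt : 1/q < 1 := (div_lt_one hq0).mpr hq
  have hpinv : (0:ℝ) < 1/p := by linarith
  have hp0 : (0:ℝ) < p := by
    rcases lt_trichotomy p 0 with h|h|h
    · exfalso; have := one_div_neg.mpr h; linarith
    · exfalso; rw [h] at hpinv; simp at hpinv
    · exact h
  have hp1 : 1 < p := (div_lt_one hp0).mp (by linarith)
  have huIcc : Set.uIcc a b = Set.Icc a b := Set.uIcc_of_le hab.le
  have hba : (0:ℝ) < b - a := by linarith
  -- integration by parts identity
  have hparts : ∫ x in a..b, (x - m) * f' x
      = (b - m) * f b - (a - m) * f a - ∫ x in a..b, (1:ℝ) * f x :=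
    intervalIntegral.integral_mul_deriv_eq_deriv_mul (u := fun x => x - m) (v := f)
      (u' := fun _ => (1:ℝ)) (v' := f')
      (fun x _ => by simpa using (hasDerivAt_id x).sub_const m)
      (fun x hx => hder x (hI (huIcc ▸ hx))) intervalIntegrable_const hint
  have hid : (f a + f b)/2 - (1 / (b - a)) * ∫ x in a..b, f x
      = (1/(b - a)) * ∫ x in a..b, (x - m) * f' x := by
    rw [hparts]
    simp only [one_mul]
    rw [hm_def]
    field_simp
    ring
  -- measurability facts
  have hderiv_meas : Measurable (deriv f) := measurable_deriv f
  have hfm : ∀ x ∈ Set.Icc a b, f' x = deriv f x := fun x hx => ((hder x (hI hx)).deriv).symm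
  have hg2m : AEStronglyMeasurable (fun y => f' (a + m - y)) (volume.restrict (Set.Ioc a m)) := by
    have h1 : Measurable (fun y : ℝ => deriv f (a + m - y)) :=
      hderiv_meas.comp (measurable_const.sub measurable_id)
    refine h1.aestronglyMeasurable.congr ?_
    refine (ae_restrict_iff' measurableSet_Ioc).mpr (ae_of_all _ fun y hy => ?_)
    exact (hfm (a + m - y) ⟨by linarith [hy.2], by linarith [hy.1, hmb.le]⟩).symm
  have hg3m : AEStronglyMeasurable f' (volume.restrict (Set.Ioc m b)) := by
    refine hderiv_meas.aestronglyMeasurable.congr ?_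
    refine (ae_restrict_iff' measurableSet_Ioc).mpr (ae_of_all _ fun y hy => ?_)
    exact (hfm y ⟨by linarith [hy.1, ham.le], hy.2⟩).symm
  -- the two Hölder estimates
  have hK1 : ∫ x in a..m, (x - a) * |f' (a + m - x)|
      ≤ (m - a)^2 * (1/(p+1)) ^ (1/p) * ((|f' a| ^ q + |f' m| ^ q)/(s+1)) ^ (1/q) := by
    apply holder_seg _ _ _ s p q _ _ ham hs0 hq hp1 hpq (by positivity) (by positivity) hg2m
    intro z hz
    have hma : (0:ℝ) < m - a := by linarith
    have ht : (z - a)/(m - a) ∈ Set.Icc (0:ℝ) 1 :=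
      ⟨div_nonneg (by linarith [hz.1]) hma.le, by rw [div_le_one hma]; linarith [hz.2]⟩
    have h := hconv a ⟨le_refl a, hab.le⟩ m ⟨ham.le, hmb.le⟩ _ ht
    have harg : (z - a)/(m - a) * a + (1 - (z - a)/(m - a)) * m = a + m - z := by
      field_simp; ring
    have h1t : 1 - (z - a)/(m - a) = (m - z)/(m - a) := by field_simp; ring
    rw [harg] at h
    rw [h1t] at h
    exact h
  have hK2 : ∫ x in m..b, (x - m) * |f' x|
      ≤ (b - m)^2 * (1/(p+1)) ^ (1/p) * ((|f' b| ^ q + |f' m| ^ q)/(s+1)) ^ (1/q) := by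
    apply holder_seg _ _ _ s p q _ _ hmb hs0 hq hp1 hpq (by positivity) (by positivity) hg3m
    intro z hz
    have hbm : (0:ℝ) < b - m := by linarith
    have ht : (z - m)/(b - m) ∈ Set.Icc (0:ℝ) 1 :=
      ⟨div_nonneg (by linarith [hz.1]) hbm.le, by rw [div_le_one hbm]; linarith [hz.2]⟩
    have h := hconv b ⟨hab.le, le_refl b⟩ m ⟨ham.le, hmb.le⟩ _ ht
    have harg : (z - m)/(b - m) * b + (1 - (z - m)/(b - m)) * m = z := by
      field_simp; ring
    have h1t : 1 - (z - m)/(b - m) = (b - z)/(b - m) := by field_simp; ring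
    rw [harg] at h
    rw [h1t] at h
    exact h
  -- rewrite the first half integral by reflection
  have hrefl : ∫ x in a..m, |(x - m) * f' x| = ∫ x in a..m, (x - a) * |f' (a + m - x)| := by
    have h1 : ∫ x in a..m, (fun y => (y - a) * |f' (a + m - y)|) ((a + m) - x)
        = ∫ x in (a + m) - m..(a + m) - a, (x - a) * |f' (a + m - x)| :=
      intervalIntegral.integral_comp_sub_left (fun y => (y - a) * |f' (a + m - y)|) (a + m)
    have h2 : ((a + m) - m) = a := by ring
    have h3 : ((a + m) - a) = m := by ring
    rw [h2, h3] at h1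
    rw [← h1]
    apply intervalIntegral.integral_congr
    intro x hx
    rw [Set.uIcc_of_le ham.le] at hx
    have : a + m - (a + m - x) = x := by ring
    simp only [this]
    rw [show (a + m - x - a) = m - x by ring, abs_mul, abs_of_nonpos (by linarith [hx.2] : x - m ≤ 0)]
    ring
  have hhalf2 : ∫ x in m..b, |(x - m) * f' x| = ∫ x in m..b, (x - m) * |f' x| := by
    apply intervalIntegral.integral_congr
    intro x hx
    rw [Set.uIcc_of_le hmb.le] at hx
    simp only [abs_mul]
    rw [abs_of_nonneg (by linarith [hx.1] : (0:ℝ) ≤ x - m)]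
  -- integrability of the absolute integrand
  have hw_int : IntervalIntegrable (fun x => (x - m) * f' x) volume a b :=
    hint.continuousOn_mul ((continuous_id.sub continuous_const).continuousOn)
  have habs_int : IntervalIntegrable (fun x => |(x - m) * f' x|) volume a b := hw_int.abs
  have hsub1 : Set.uIcc a m ⊆ Set.uIcc a b := by
    rw [Set.uIcc_of_le ham.le, huIcc]; exact Set.Icc_subset_Icc le_rfl hmb.le
  have hsub2 : Set.uIcc m b ⊆ Set.uIcc a b := by
    rw [Set.uIcc_of_le hmb.le, huIcc]; exact Set.Icc_subset_Icc ham.le le_rfl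
  have hsplit : ∫ x in a..b, |(x - m) * f' x|
      = (∫ x in a..m, |(x - m) * f' x|) + ∫ x in m..b, |(x - m) * f' x| :=
    (intervalIntegral.integral_add_adjacent_intervals
      (habs_int.mono_set hsub1) (habs_int.mono_set hsub2)).symm
  -- put everything together
  rw [hid, abs_mul, abs_of_nonneg (by positivity : (0:ℝ) ≤ 1/(b - a))]
  have hstep : |∫ x in a..b, (x - m) * f' x| ≤ ∫ x in a..b, |(x - m) * f' x| :=
    intervalIntegral.abs_integral_le_integral_abs hab.le
  set C : ℝ := (1/(p+1)) ^ (1/p) with hC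
  set K1 : ℝ := ((|f' m| ^ q + |f' a| ^ q)/(s+1)) ^ (1/q) with hK1def
  set K2 : ℝ := ((|f' m| ^ q + |f' b| ^ q)/(s+1)) ^ (1/q) with hK2def
  have hCpos : 0 ≤ C := Real.rpow_nonneg (by positivity) _
  have htot : ∫ x in a..b, |(x - m) * f' x| ≤ (b - a)^2/4 * C * (K1 + K2) := by
    rw [hsplit, hrefl, hhalf2]
    have e1 : (m - a) = (b - a)/2 := by rw [hm_def]; ring
    have e2 : (b - m) = (b - a)/2 := by rw [hm_def]; ring
    calc (∫ x in a..m, (x - a) * |f' (a + m - x)|) + ∫ x in m..b, (x - m) * |f' x|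
        ≤ (m - a)^2 * C * ((|f' a| ^ q + |f' m| ^ q)/(s+1)) ^ (1/q)
          + (b - m)^2 * C * ((|f' b| ^ q + |f' m| ^ q)/(s+1)) ^ (1/q) := add_le_add hK1 hK2
      _ = (b - a)^2/4 * C * (K1 + K2) := by
          rw [e1, e2, hK1def, hK2def, add_comm (|f' a| ^ q), add_comm (|f' b| ^ q)]
          ring
  calc (1/(b - a)) * |∫ x in a..b, (x - m) * f' x|
      ≤ (1/(b - a)) * ((b - a)^2/4 * C * (K1 + K2)) := by
        apply mul_le_mul_of_nonneg_left (hstep.trans htot) (by positivity)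
    _ = ((b - a)/4) * C * (K1 + K2) := by field_simp
end

section
/- Let f be differentiable on I° with f' integrable on [a,b], a < b, q > 1 with 1/p+1/q = 1, and |f'|^q s-convex in the second sense on [a,b] for s ∈ (0,1]. Then |f((a+b)/2) - (1/(b-a))∫ₐᵇ f(x)dx| ≤ ((b-a)/4)(1/(p+1))^{1/p} · { ((|f'((a+b)/2)|^q + |f'(a)|^q)/(s+1))^{1/q} + ((|f'((a+b)/2)|^q + |f'(b)|^q)/(s+1))^{1/q} }. -/
open MeasureTheory

private lemma aux_holder (g : ℝ → ℝ) (c d s p q : ℝ) (hcd : c < d)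
    (hs : s ∈ Set.Ioc (0:ℝ) 1) (hq : 1 < q) (hpq : 1/p + 1/q = 1)
    (hmeas : AEStronglyMeasurable g (volume.restrict (Set.Ioc c d)))
    (hconv : ∀ t ∈ Set.Icc (0:ℝ) 1,
      |g (t * d + (1 - t) * c)| ^ q ≤ t ^ s * |g d| ^ q + (1 - t) ^ s * |g c| ^ q) :
    ∫ x in c..d, (x - c) * |g x| ≤
      (d - c)^2 * (1/(p+1)) ^ (1/p) * ((|g d| ^ q + |g c| ^ q) / (s+1)) ^ (1/q) := by
  have hdc : (0:ℝ) < d - c := by linarith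
  have hq0 : (0:ℝ) < q := by linarith
  have h1q : 1/q < 1 := by rw [div_lt_one hq0]; exact hq
  have h1q0 : 0 < 1/q := by positivity
  have h1p : 1/p = 1 - 1/q := by linarith
  have h1p0 : 0 < 1/p := by rw [h1p]; linarith
  have hp0 : 0 < p := one_div_pos.mp h1p0
  have hp1 : 1 < p := by
    have h : 1/p < 1 := by rw [h1p]; linarith
    rwa [div_lt_one hp0] at h
  have hp1' : (0:ℝ) < p + 1 := by linarith
  have hs1' : (0:ℝ) < s + 1 := by linarith [hs.1]
  have hpq' : p.HolderConjugate q := Real.holderConjugate_iff.mpr ⟨hp1, by simp only [← one_div]; exact hpq⟩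
  set A := |g d| ^ q with hA
  set B := |g c| ^ q with hB
  have hA0 : 0 ≤ A := Real.rpow_nonneg (abs_nonneg _) _
  have hB0 : 0 ≤ B := Real.rpow_nonneg (abs_nonneg _) _
  have key : ∀ x ∈ Set.Icc c d,
      |g x| ^ q ≤ ((x - c)/(d - c)) ^ s * A + ((d - x)/(d - c)) ^ s * B := by
    intro x hx
    have ht : (x - c)/(d - c) ∈ Set.Icc (0:ℝ) 1 :=
      ⟨div_nonneg (by linarith [hx.1]) hdc.le, (div_le_one hdc).2 (by linarith [hx.2])⟩
    have h := hconv _ ht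
    have h1t : 1 - (x - c)/(d - c) = (d - x)/(d - c) := by
      field_simp
      ring
    rw [h1t] at h
    rw [show (x - c)/(d - c) * d + (d - x)/(d - c) * c = x by field_simp; ring] at h
    exact h
  have bdd : ∀ x ∈ Set.Icc c d, |g x| ^ q ≤ A + B := by
    intro x hx
    have h := key x hx
    have ht : (x - c)/(d - c) ∈ Set.Icc (0:ℝ) 1 :=
      ⟨div_nonneg (by linarith [hx.1]) hdc.le, (div_le_one hdc).2 (by linarith [hx.2])⟩
    have ht' : (d - x)/(d - c) ∈ Set.Icc (0:ℝ) 1 :=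
      ⟨div_nonneg (by linarith [hx.2]) hdc.le, (div_le_one hdc).2 (by linarith [hx.1])⟩
    have e1 : ((x - c)/(d - c)) ^ s ≤ 1 := Real.rpow_le_one ht.1 ht.2 hs.1.le
    have e2 : ((d - x)/(d - c)) ^ s ≤ 1 := Real.rpow_le_one ht'.1 ht'.2 hs.1.le
    have e1' : 0 ≤ ((x - c)/(d - c)) ^ s := Real.rpow_nonneg ht.1 _
    have e2' : 0 ≤ ((d - x)/(d - c)) ^ s := Real.rpow_nonneg ht'.1 _
    nlinarith
  have hmeas_absq : AEStronglyMeasurable (fun x => |g x| ^ q)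
      (volume.restrict (Set.Ioc c d)) := by
    have h := (Real.continuous_rpow_const hq0.le).comp_aestronglyMeasurable hmeas.norm
    simpa [Real.norm_eq_abs] using h
  have hint_gq : IntegrableOn (fun x => |g x| ^ q) (Set.Ioc c d) volume := by
    refine Integrable.mono' (integrable_const (A + B)) hmeas_absq ?_
    filter_upwards [ae_restrict_mem measurableSet_Ioc] with x hx
    rw [Real.norm_eq_abs, abs_of_nonneg (Real.rpow_nonneg (abs_nonneg _) _)]
    exact bdd x ⟨hx.1.le, hx.2⟩
  haveI : IsFiniteMeasure (volume.restrict (Set.Ioc c d)) :=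
    ⟨by rw [Measure.restrict_apply_univ]; exact measure_Ioc_lt_top⟩
  have hq_ne : ENNReal.ofReal q ≠ 0 := by
    simp [ENNReal.ofReal_eq_zero, not_le, hq0]
  have hq_top : ENNReal.ofReal q ≠ ⊤ := ENNReal.ofReal_ne_top
  have hg_mem : MemLp g (ENNReal.ofReal q) (volume.restrict (Set.Ioc c d)) := by
    refine (memLp_norm_rpow_iff hmeas hq_ne hq_top).1 ?_
    rw [ENNReal.toReal_ofReal hq0.le, ENNReal.div_self hq_ne hq_top,
      memLp_one_iff_integrable]
    simpa [Real.norm_eq_abs] using hint_gq.integrable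
  have habs_mem : MemLp (fun x => |g x|) (ENNReal.ofReal q)
      (volume.restrict (Set.Ioc c d)) := by
    simpa [Real.norm_eq_abs] using hg_mem.norm
  have hw_mem : MemLp (fun x => x - c) (ENNReal.ofReal p)
      (volume.restrict (Set.Ioc c d)) := by
    refine MemLp.of_bound ((continuous_id.sub continuous_const).aestronglyMeasurable)
      (d - c) ?_
    filter_upwards [ae_restrict_mem measurableSet_Ioc] with x hx
    rw [Real.norm_eq_abs, abs_of_nonneg (by linarith [hx.1] : (0:ℝ) ≤ x - c)]
    linarith [hx.2]
  have holder : ∫ x in Set.Ioc c d, (x - c) * |g x| ≤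
      (∫ x in Set.Ioc c d, (x - c) ^ p) ^ (1/p) * (∫ x in Set.Ioc c d, |g x| ^ q) ^ (1/q) := by
    refine integral_mul_le_Lp_mul_Lq_of_nonneg hpq' ?_ ?_ hw_mem habs_mem
    · filter_upwards [ae_restrict_mem measurableSet_Ioc] with x hx
      simp only [Pi.zero_apply]
      linarith [hx.1]
    · exact Filter.Eventually.of_forall fun x => abs_nonneg _
  have hW : ∫ x in Set.Ioc c d, (x - c) ^ p = (d - c) ^ (p+1) / (p+1) := by
    rw [← intervalIntegral.integral_of_le hcd.le]
    have h1 : (∫ x in c..d, (x - c) ^ p) = ∫ x in c - c..d - c, x ^ p :=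
      intervalIntegral.integral_comp_sub_right (fun y => y ^ p) c
    rw [h1, integral_rpow (Or.inl (by linarith : (-1:ℝ) < p)), sub_self,
      Real.zero_rpow (by positivity : p + 1 ≠ 0), sub_zero]
  have hI1 : (∫ x in c..d, ((x - c)/(d - c)) ^ s) = (d - c)/(s+1) := by
    have h1 : (∫ x in c..d, ((x - c)/(d - c)) ^ s) = ∫ x in c - c..d - c, (x/(d - c)) ^ s :=
      intervalIntegral.integral_comp_sub_right (fun y => (y/(d - c)) ^ s) c
    have h2 : (∫ x in c - c..d - c, (x/(d - c)) ^ s)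
        = (d - c) • ∫ x in (c - c)/(d - c)..(d - c)/(d - c), x ^ s :=
      intervalIntegral.integral_comp_div (f := fun y => y ^ s) hdc.ne'
    rw [h1, h2, sub_self, zero_div, div_self hdc.ne',
      integral_rpow (Or.inl (by linarith [hs.1] : (-1:ℝ) < s)),
      Real.one_rpow, Real.zero_rpow (by positivity : s + 1 ≠ 0), smul_eq_mul]
    ring
  have hI2 : (∫ x in c..d, ((d - x)/(d - c)) ^ s) = (d - c)/(s+1) := by
    have h1 : (∫ x in c..d, ((d - x)/(d - c)) ^ s) = ∫ x in d - d..d - c, (x/(d - c)) ^ s :=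
      intervalIntegral.integral_comp_sub_left (fun y => (y/(d - c)) ^ s) d
    have h2 : (∫ x in d - d..d - c, (x/(d - c)) ^ s)
        = (d - c) • ∫ x in (d - d)/(d - c)..(d - c)/(d - c), x ^ s :=
      intervalIntegral.integral_comp_div (f := fun y => y ^ s) hdc.ne'
    rw [h1, h2, sub_self, zero_div, div_self hdc.ne',
      integral_rpow (Or.inl (by linarith [hs.1] : (-1:ℝ) < s)),
      Real.one_rpow, Real.zero_rpow (by positivity : s + 1 ≠ 0), smul_eq_mul]
    ring
  have c1 : Continuous fun x : ℝ => ((x - c)/(d - c)) ^ s :=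
    (Real.continuous_rpow_const hs.1.le).comp ((continuous_sub_right c).div_const _)
  have c2 : Continuous fun x : ℝ => ((d - x)/(d - c)) ^ s :=
    (Real.continuous_rpow_const hs.1.le).comp ((continuous_sub_left d).div_const _)
  have hQ : ∫ x in Set.Ioc c d, |g x| ^ q ≤ (d - c) * ((A + B)/(s+1)) := by
    have hR_cont : Continuous (fun x : ℝ =>
        ((x - c)/(d - c)) ^ s * A + ((d - x)/(d - c)) ^ s * B) :=
      (c1.mul continuous_const).add (c2.mul continuous_const)
    have hR_int : IntegrableOn (fun x : ℝ =>
        ((x - c)/(d - c)) ^ s * A + ((d - x)/(d - c)) ^ s * B) (Set.Ioc c d) volume :=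
      (hR_cont.intervalIntegrable c d).1
    have mono := setIntegral_mono_on hint_gq hR_int measurableSet_Ioc
      (fun x hx => key x ⟨hx.1.le, hx.2⟩)
    have e : ∫ x in Set.Ioc c d, (((x - c)/(d - c)) ^ s * A + ((d - x)/(d - c)) ^ s * B)
        = (d - c)/(s+1) * A + (d - c)/(s+1) * B := by
      rw [← intervalIntegral.integral_of_le hcd.le,
        intervalIntegral.integral_add (f := fun x : ℝ => ((x - c)/(d - c)) ^ s * A) (g := fun x : ℝ => ((d - x)/(d - c)) ^ s * B) ((c1.mul continuous_const).intervalIntegrable _ _)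
          ((c2.mul continuous_const).intervalIntegrable _ _),
        intervalIntegral.integral_mul_const, intervalIntegral.integral_mul_const, hI1, hI2]
    rw [e] at mono
    calc ∫ x in Set.Ioc c d, |g x| ^ q ≤ (d - c)/(s+1) * A + (d - c)/(s+1) * B := mono
      _ = (d - c) * ((A + B)/(s+1)) := by ring
  have hQ0 : 0 ≤ ∫ x in Set.Ioc c d, |g x| ^ q :=
    setIntegral_nonneg measurableSet_Ioc (fun x _ => Real.rpow_nonneg (abs_nonneg _) _)
  have hexp : (p+1)*(1/p) + 1/q = 2 := by
    rw [add_mul, mul_one_div, div_self hp0.ne', one_mul]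
    linarith
  have hcomb : (d - c) ^ ((p+1)*(1/p)) * (d - c) ^ (1/q) = (d - c)^2 := by
    rw [← Real.rpow_add hdc, hexp, Real.rpow_two]
  have e1 : ((d - c) ^ (p+1) / (p+1)) ^ (1/p)
      = (d - c) ^ ((p+1)*(1/p)) * (1/(p+1)) ^ (1/p) := by
    rw [div_eq_mul_one_div, Real.mul_rpow (Real.rpow_nonneg hdc.le _) (by positivity),
      ← Real.rpow_mul hdc.le]
  have e2 : ((d - c) * ((A + B)/(s+1))) ^ (1/q)
      = (d - c) ^ (1/q) * ((A + B)/(s+1)) ^ (1/q) :=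
    Real.mul_rpow hdc.le (by positivity)
  calc ∫ x in c..d, (x - c) * |g x|
      = ∫ x in Set.Ioc c d, (x - c) * |g x| := intervalIntegral.integral_of_le hcd.le
    _ ≤ (∫ x in Set.Ioc c d, (x - c) ^ p) ^ (1/p) * (∫ x in Set.Ioc c d, |g x| ^ q) ^ (1/q) :=
        holder
    _ ≤ ((d - c) ^ (p+1) / (p+1)) ^ (1/p) * ((d - c) * ((A + B)/(s+1))) ^ (1/q) := by
        rw [hW]
        exact mul_le_mul_of_nonneg_left (Real.rpow_le_rpow hQ0 hQ h1q0.le)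
          (Real.rpow_nonneg (by positivity) _)
    _ = (d - c)^2 * (1/(p+1)) ^ (1/p) * ((A + B) / (s+1)) ^ (1/q) := by
        rw [e1, e2, ← hcomb]; ring

theorem stmt_10 (I : Set ℝ) (f f' : ℝ → ℝ) (a b s p q : ℝ)
    (hab : a < b) (hI0 : I ⊆ Set.Ici (0:ℝ)) (hI : Set.Icc a b ⊆ interior I)
    (hs : s ∈ Set.Ioc (0:ℝ) 1) (hq : 1 < q) (hpq : 1/p + 1/q = 1)
    (hder : ∀ x ∈ interior I, HasDerivAt f (f' x) x)
    (hint : IntervalIntegrable f' volume a b)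
    (hconv : ∀ x ∈ Set.Icc a b, ∀ y ∈ Set.Icc a b, ∀ t ∈ Set.Icc (0:ℝ) 1,
      |f' (t * x + (1 - t) * y)| ^ q ≤ t ^ s * |f' x| ^ q + (1 - t) ^ s * |f' y| ^ q) :
    |f ((a + b)/2) - (1 / (b - a)) * ∫ x in a..b, f x|
      ≤ ((b - a)/4) * (1/(p+1)) ^ (1/p) *
        (((|f' ((a + b)/2)| ^ q + |f' a| ^ q) / (s+1)) ^ (1/q)
          + ((|f' ((a + b)/2)| ^ q + |f' b| ^ q) / (s+1)) ^ (1/q)) := by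
  set m : ℝ := (a + b)/2 with hm_def
  have hba : (0:ℝ) < b - a := by linarith
  have ham : a < m := by rw [hm_def]; linarith
  have hmb : m < b := by rw [hm_def]; linarith
  have ha_mem : a ∈ Set.Icc a b := ⟨le_refl a, hab.le⟩
  have hb_mem : b ∈ Set.Icc a b := ⟨hab.le, le_refl b⟩
  have hm_mem : m ∈ Set.Icc a b := ⟨ham.le, hmb.le⟩
  have hsub1 : Set.uIcc a m ⊆ Set.uIcc a b := by
    rw [Set.uIcc_of_le ham.le, Set.uIcc_of_le hab.le]
    exact Set.Icc_subset_Icc le_rfl hmb.le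
  have hsub2 : Set.uIcc m b ⊆ Set.uIcc a b := by
    rw [Set.uIcc_of_le hmb.le, Set.uIcc_of_le hab.le]
    exact Set.Icc_subset_Icc ham.le le_rfl
  have hsub1' : Set.uIcc a m ⊆ Set.Icc a b := by
    rw [Set.uIcc_of_le ham.le]; exact Set.Icc_subset_Icc le_rfl hmb.le
  have hsub2' : Set.uIcc m b ⊆ Set.Icc a b := by
    rw [Set.uIcc_of_le hmb.le]; exact Set.Icc_subset_Icc ham.le le_rfl
  have hfc : ∀ x ∈ Set.Icc a b, ContinuousAt f x := fun x hx => (hder x (hI hx)).continuousAt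
  have hfi1 : IntervalIntegrable f volume a m := by
    apply ContinuousOn.intervalIntegrable
    exact fun x hx => (hfc x (hsub1' hx)).continuousWithinAt
  have hfi2 : IntervalIntegrable f volume m b := by
    apply ContinuousOn.intervalIntegrable
    exact fun x hx => (hfc x (hsub2' hx)).continuousWithinAt
  have ibp1 : ∫ x in a..m, (x - a) * f' x
      = (m - a) * f m - (a - a) * f a - ∫ x in a..m, 1 * f x :=
    intervalIntegral.integral_mul_deriv_eq_deriv_mul
      (fun x _ => (hasDerivAt_id x).sub_const a)
      (fun x hx => hder x (hI (hsub1' hx)))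
      intervalIntegrable_const (hint.mono_set hsub1)
  have ibp2 : ∫ x in m..b, (x - b) * f' x
      = (b - b) * f b - (m - b) * f m - ∫ x in m..b, 1 * f x :=
    intervalIntegral.integral_mul_deriv_eq_deriv_mul
      (fun x _ => (hasDerivAt_id x).sub_const b)
      (fun x hx => hder x (hI (hsub2' hx)))
      intervalIntegrable_const (hint.mono_set hsub2)
  have hadd : (∫ x in a..m, f x) + ∫ x in m..b, f x = ∫ x in a..b, f x :=
    intervalIntegral.integral_add_adjacent_intervals hfi1 hfi2
  have hone1 : (∫ x in a..m, (1:ℝ) * f x) = ∫ x in a..m, f x := by simp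
  have hone2 : (∫ x in m..b, (1:ℝ) * f x) = ∫ x in m..b, f x := by simp
  have hsum : (∫ x in a..m, (x - a) * f' x) + (∫ x in m..b, (x - b) * f' x)
      = (b - a) * f m - ∫ x in a..b, f x := by
    rw [ibp1, ibp2, hone1, hone2, ← hadd]; ring
  have heq : f m - (1/(b - a)) * ∫ x in a..b, f x
      = (1/(b - a)) * ((∫ x in a..m, (x - a) * f' x) + (∫ x in m..b, (x - b) * f' x)) := by
    rw [hsum]
    field_simp
  -- bounds on the two pieces
  have hmeas1 : AEStronglyMeasurable f' (volume.restrict (Set.Ioc a m)) :=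
    hint.1.aestronglyMeasurable.mono_measure
      (Measure.restrict_mono (Set.Ioc_subset_Ioc le_rfl hmb.le) le_rfl)
  have hT1 : ∫ x in a..m, (x - a) * |f' x|
      ≤ (m - a)^2 * (1/(p+1)) ^ (1/p) * ((|f' m| ^ q + |f' a| ^ q)/(s+1)) ^ (1/q) :=
    aux_holder f' a m s p q ham hs hq hpq hmeas1 (fun t ht => hconv m hm_mem a ha_mem t ht)
  have habs1 : |∫ x in a..m, (x - a) * f' x| ≤ ∫ x in a..m, (x - a) * |f' x| := by
    refine (intervalIntegral.abs_integral_le_integral_abs ham.le).trans_eq ?_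
    rw [intervalIntegral.integral_of_le ham.le, intervalIntegral.integral_of_le ham.le]
    refine setIntegral_congr_fun measurableSet_Ioc (fun x hx => ?_)
    rw [abs_mul, abs_of_nonneg (by linarith [hx.1] : (0:ℝ) ≤ x - a)]
  have e1 : a + b - m = m := by rw [hm_def]; ring
  have e2 : a + b - a = b := by ring
  have hmeasG : AEStronglyMeasurable (fun u => f' (a + b - u))
      (volume.restrict (Set.Ioc a m)) := by
    have hm1 : Measurable (fun u : ℝ => deriv f (a + b - u)) :=
      (measurable_deriv f).comp (measurable_const.sub measurable_id)
    refine hm1.aestronglyMeasurable.congr ?_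
    refine (ae_restrict_iff' measurableSet_Ioc).2 (Filter.Eventually.of_forall fun x hx => ?_)
    have hx' : a + b - x ∈ Set.Icc a b := by
      constructor
      · have : x ≤ m := hx.2
        have : a + b - x ≥ a + b - m := by linarith
        rw [e1] at this
        linarith
      · linarith [hx.1]
    exact (hder _ (hI hx')).deriv
  have hconvG : ∀ t ∈ Set.Icc (0:ℝ) 1,
      |f' (a + b - (t * m + (1 - t) * a))| ^ q
        ≤ t ^ s * |f' (a + b - m)| ^ q + (1 - t) ^ s * |f' (a + b - a)| ^ q := by
    intro t ht
    have harg : a + b - (t * m + (1 - t) * a) = t * m + (1 - t) * b := by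
      rw [hm_def]; ring
    rw [harg, e1, e2]
    exact hconv m hm_mem b hb_mem t ht
  have hT2 : ∫ x in a..m, (x - a) * |f' (a + b - x)|
      ≤ (m - a)^2 * (1/(p+1)) ^ (1/p)
        * ((|f' (a + b - m)| ^ q + |f' (a + b - a)| ^ q)/(s+1)) ^ (1/q) :=
    aux_holder (fun u => f' (a + b - u)) a m s p q ham hs hq hpq hmeasG hconvG
  rw [e1, e2] at hT2
  have hrefl : (∫ x in m..b, (b - x) * |f' x|) = ∫ x in a..m, (x - a) * |f' (a + b - x)| := by
    have h : (∫ x in a..m, (b - (a + b - x)) * |f' (a + b - x)|)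
        = ∫ x in (a + b) - m..(a + b) - a, (b - x) * |f' x| :=
      intervalIntegral.integral_comp_sub_left (fun y => (b - y) * |f' y|) (a + b)
    have e3 : (∫ x in a..m, (b - (a + b - x)) * |f' (a + b - x)|)
        = ∫ x in a..m, (x - a) * |f' (a + b - x)| := by
      refine intervalIntegral.integral_congr (fun x _ => ?_)
      ring_nf
    rw [e3] at h
    rw [show a + b - m = m from e1, show a + b - a = b from e2] at h
    exact h.symm
  have habs2 : |∫ x in m..b, (x - b) * f' x| ≤ ∫ x in m..b, (b - x) * |f' x| := by
    refine (intervalIntegral.abs_integral_le_integral_abs hmb.le).trans_eq ?_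
    rw [intervalIntegral.integral_of_le hmb.le, intervalIntegral.integral_of_le hmb.le]
    refine setIntegral_congr_fun measurableSet_Ioc (fun x hx => ?_)
    rw [abs_mul, abs_sub_comm x b, abs_of_nonneg (by linarith [hx.2] : (0:ℝ) ≤ b - x)]
  have hbound2 : |∫ x in m..b, (x - b) * f' x|
      ≤ (m - a)^2 * (1/(p+1)) ^ (1/p) * ((|f' m| ^ q + |f' b| ^ q)/(s+1)) ^ (1/q) := by
    calc |∫ x in m..b, (x - b) * f' x| ≤ ∫ x in m..b, (b - x) * |f' x| := habs2
      _ = ∫ x in a..m, (x - a) * |f' (a + b - x)| := hrefl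
      _ ≤ _ := hT2
  have hbound1 : |∫ x in a..m, (x - a) * f' x|
      ≤ (m - a)^2 * (1/(p+1)) ^ (1/p) * ((|f' m| ^ q + |f' a| ^ q)/(s+1)) ^ (1/q) :=
    habs1.trans hT1
  have hma : m - a = (b - a)/2 := by rw [hm_def]; ring
  have hinv_pos : (0:ℝ) < 1/(b - a) := by positivity
  calc |f m - (1/(b - a)) * ∫ x in a..b, f x|
      = (1/(b - a)) * |(∫ x in a..m, (x - a) * f' x) + (∫ x in m..b, (x - b) * f' x)| := by
        rw [heq, abs_mul, abs_of_pos hinv_pos]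
    _ ≤ (1/(b - a)) * (|∫ x in a..m, (x - a) * f' x| + |∫ x in m..b, (x - b) * f' x|) :=
        mul_le_mul_of_nonneg_left (abs_add_le _ _) hinv_pos.le
    _ ≤ (1/(b - a)) * ((m - a)^2 * (1/(p+1)) ^ (1/p) * ((|f' m| ^ q + |f' a| ^ q)/(s+1)) ^ (1/q)
          + (m - a)^2 * (1/(p+1)) ^ (1/p) * ((|f' m| ^ q + |f' b| ^ q)/(s+1)) ^ (1/q)) :=
        mul_le_mul_of_nonneg_left (add_le_add hbound1 hbound2) hinv_pos.le
    _ = ((b - a)/4) * (1/(p+1)) ^ (1/p) *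
        (((|f' m| ^ q + |f' a| ^ q) / (s+1)) ^ (1/q)
          + ((|f' m| ^ q + |f' b| ^ q) / (s+1)) ^ (1/q)) := by
        rw [hma]
        field_simp
        ring
end
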